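/- arXiv:2211.13563 — 10 statements merged into one kernel-verified Lean document; each statement's English description precedes it below -/
import Mathlib

section
/- If f is holomorphic and locally univalent on the unit disk with f(0)=0, f'(0)=1, and Re(1 + z f''(z)/f'(z)) > α for all z in the unit disk (i.e., f is convex of order α, 0 ≤ α < 1), then for all z in the unit disk, Re(1 + z f''(z)/f'(z)) ≥ α + (1/(4(1-α)))·(1-|z|²)·|f''(z)/f'(z)|². -/
open Metric Set Filter Topology

set_option maxHeartbeats 1600000 in
theorem convex_order_alpha_lower_bound_re
    (f : ℂ → ℂ) (α : ℝ) (hα0 : 0 ≤ α) (hα1 : α < 1)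
    (hf : DifferentiableOn ℂ f (Metric.ball 0 1))
    (hf' : ∀ z ∈ Metric.ball (0:ℂ) 1, deriv f z ≠ 0)
    (hf0 : f 0 = 0) (hf1 : deriv f 0 = 1)
    (hconv : ∀ z ∈ Metric.ball (0:ℂ) 1,
      α < (1 + z * (deriv (deriv f) z / deriv f z)).re) :
    ∀ z ∈ Metric.ball (0:ℂ) 1,
      α + (1 / (4 * (1 - α))) * (1 - ‖z‖ ^ 2) *
          ‖deriv (deriv f) z / deriv f z‖ ^ 2
        ≤ (1 + z * (deriv (deriv f) z / deriv f z)).re := by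
  have h1α : (0:ℝ) < 1 - α := by linarith
  have h1αC : (1 : ℂ) - (α:ℂ) ≠ 0 := by
    have : ((1 - α : ℝ) : ℂ) ≠ 0 := Complex.ofReal_ne_zero.2 h1α.ne'
    simpa using this
  set g : ℂ → ℂ := fun z => deriv (deriv f) z / deriv f z with hg
  have hball : IsOpen (Metric.ball (0:ℂ) 1) := Metric.isOpen_ball
  have hfa : AnalyticOnNhd ℂ f (Metric.ball 0 1) := hf.analyticOnNhd hball
  have hd1 : DifferentiableOn ℂ (deriv f) (Metric.ball 0 1) :=
    hfa.deriv.differentiableOn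
  have hd2 : DifferentiableOn ℂ (deriv (deriv f)) (Metric.ball 0 1) :=
    hfa.deriv.deriv.differentiableOn
  have hgd : DifferentiableOn ℂ g (Metric.ball 0 1) := hd2.div hd1 hf'
  set P : ℂ → ℂ := fun z => (1 + z * g z - (α:ℂ)) / (1 - (α:ℂ)) with hP
  have hPd : DifferentiableOn ℂ P (Metric.ball 0 1) := by
    apply DifferentiableOn.div_const
    exact (differentiableOn_const _).add (differentiableOn_id.mul hgd) |>.sub
      (differentiableOn_const _)
  have hPre : ∀ z ∈ Metric.ball (0:ℂ) 1, (P z).re = (1 + (z * g z).re - α) / (1 - α) := by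
    intro z hz
    have : P z = (1 + z * g z - (α:ℂ)) / ((1 - α : ℝ) : ℂ) := by
      rw [hP]; push_cast; ring_nf
    rw [this, Complex.div_ofReal_re]
    simp [Complex.add_re, Complex.sub_re]
  have hPrepos : ∀ z ∈ Metric.ball (0:ℂ) 1, 0 < (P z).re := by
    intro z hz
    rw [hPre z hz]
    have := hconv z hz
    simp only [Complex.add_re, Complex.one_re] at this
    apply div_pos <;> linarith
  have hPne : ∀ z ∈ Metric.ball (0:ℂ) 1, P z + 1 ≠ 0 := by
    intro z hz h
    have h2 : (P z + 1).re = 0 := by rw [h]; simp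
    have := hPrepos z hz
    simp only [Complex.add_re, Complex.one_re] at h2
    linarith
  set w : ℂ → ℂ := fun z => (P z - 1) / (P z + 1) with hw
  have hwd : DifferentiableOn ℂ w (Metric.ball 0 1) :=
    (hPd.sub (differentiableOn_const _)).div (hPd.add (differentiableOn_const _)) hPne
  have habslt : ∀ z ∈ Metric.ball (0:ℂ) 1,
      ‖P z - 1‖ < ‖P z + 1‖ := by
    intro z hz
    have ha := hPrepos z hz
    have hsq : ‖P z - 1‖ ^ 2 < ‖P z + 1‖ ^ 2 := by
      rw [Complex.sq_norm, Complex.sq_norm, Complex.normSq_apply, Complex.normSq_apply]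
      simp only [Complex.add_re, Complex.add_im, Complex.sub_re, Complex.sub_im,
        Complex.one_re, Complex.one_im]
      nlinarith [ha]
    exact lt_of_pow_lt_pow_left₀ 2 (norm_nonneg _) hsq
  have hmaps : MapsTo w (Metric.ball 0 1) (Metric.ball 0 1) := by
    intro z hz
    rw [mem_ball_zero_iff]
    have hpos : 0 < ‖P z + 1‖ :=
      (norm_pos_iff.2 (hPne z hz))
    simp only [hw, norm_div]
    rw [div_lt_one hpos]
    exact habslt z hz
  have hw0 : w 0 = 0 := by
    have hP0 : P 0 = 1 := by
      simp only [hP, zero_mul, add_zero]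
      field_simp
    simp [hw, hP0]
  have hsch : ∀ z ∈ Metric.ball (0:ℂ) 1, ‖w z‖ ≤ ‖z‖ := by
    intro z hz
    exact Complex.norm_le_norm_of_mapsTo_ball hwd (hmaps.mono_right ball_subset_closedBall) hw0 (mem_ball_zero_iff.1 hz)
  -- key inequality away from 0
  have key : ∀ z ∈ Metric.ball (0:ℂ) 1, z ≠ 0 →
      α + (1 / (4 * (1 - α))) * (1 - ‖z‖ ^ 2) * ‖g z‖ ^ 2
        ≤ (1 + z * g z).re := by
    intro z hz hz0
    set r : ℝ := ‖z‖ with hr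
    have hr1 : r < 1 := by simpa [hr] using (mem_ball_zero_iff.1 hz)
    have hr0 : 0 < r := norm_pos_iff.2 hz0
    have hw1 : ‖P z - 1‖ ≤ r * ‖P z + 1‖ := by
      have := hsch z hz
      simp only [hw, norm_div] at this
      rwa [div_le_iff₀ (norm_pos_iff.2 (hPne z hz))] at this
    have hP1 : P z - 1 = z * g z / ((1 - α : ℝ) : ℂ) := by
      rw [hP]; push_cast; field_simp; ring
    have habs1 : ‖P z - 1‖ = r * ‖g z‖ / (1 - α) := by
      rw [hP1, norm_div, norm_mul, Complex.norm_real, Real.norm_of_nonneg h1α.le, hr]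
    -- squared inequality
    have hsq : ‖P z - 1‖ ^ 2 ≤ r ^ 2 * ‖P z + 1‖ ^ 2 := by
      have := mul_self_le_mul_self (norm_nonneg _) hw1
      nlinarith [this]
    set a : ℝ := (P z).re with ha
    set b : ℝ := (P z).im with hb
    have hns1 : ‖P z - 1‖ ^ 2 = (a - 1) ^ 2 + b ^ 2 := by
      rw [Complex.sq_norm, Complex.normSq_apply]
      simp only [Complex.sub_re, Complex.sub_im, Complex.one_re, Complex.one_im]
      ring
    have hns2 : ‖P z + 1‖ ^ 2 = (a + 1) ^ 2 + b ^ 2 := by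
      rw [Complex.sq_norm, Complex.normSq_apply]
      simp only [Complex.add_re, Complex.add_im, Complex.one_re, Complex.one_im]
      ring
    have hmain : (1 - r ^ 2) * ((a - 1) ^ 2 + b ^ 2) ≤ 4 * r ^ 2 * a := by
      rw [hns1, hns2] at hsq
      nlinarith [hsq]
    have haeq : a = (1 + (z * g z).re - α) / (1 - α) := hPre z hz
    have habs1' : (a - 1) ^ 2 + b ^ 2 = (r * ‖g z‖ / (1 - α)) ^ 2 := by
      rw [← hns1, habs1]
    set s : ℝ := ‖g z‖ with hs
    set t : ℝ := (z * g z).re with ht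
    have hgoal : α + (1 / (4 * (1 - α))) * (1 - r ^ 2) * s ^ 2 ≤ 1 + t := by
      have h2 : (1 - r ^ 2) * (r * s / (1 - α)) ^ 2 ≤ 4 * r ^ 2 * ((1 + t - α) / (1 - α)) := by
        rw [← habs1', ← haeq]; exact hmain
      have h2' := mul_le_mul_of_nonneg_right h2 (sq_nonneg (1 - α))
      have lhs_eq : (1 - r ^ 2) * (r * s / (1 - α)) ^ 2 * (1 - α) ^ 2
          = (1 - r ^ 2) * (r * s) ^ 2 := by
        field_simp
      have rhs_eq : 4 * r ^ 2 * ((1 + t - α) / (1 - α)) * (1 - α) ^ 2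
          = 4 * r ^ 2 * (1 + t - α) * (1 - α) := by
        field_simp
      rw [lhs_eq, rhs_eq] at h2'
      have hrr : 0 < r ^ 2 := pow_pos hr0 2
      have e3 : (1 - r ^ 2) * s ^ 2 ≤ 4 * (1 + t - α) * (1 - α) := by
        nlinarith [h2', hrr]
      have hrw : (1 / (4 * (1 - α))) * (1 - r ^ 2) * s ^ 2
          = ((1 - r ^ 2) * s ^ 2) / (4 * (1 - α)) := by ring
      rw [hrw]
      have h5 : ((1 - r ^ 2) * s ^ 2) / (4 * (1 - α)) ≤ 1 + t - α := by
        rw [div_le_iff₀ (by positivity : (0:ℝ) < 4 * (1 - α))]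
        nlinarith [e3]
      linarith
    calc α + (1 / (4 * (1 - α))) * (1 - r ^ 2) * s ^ 2 ≤ 1 + t := hgoal
      _ = (1 + z * g z).re := by simp [Complex.add_re, ht]
  intro z hz
  rcases eq_or_ne z 0 with rfl | hz0
  · -- continuity argument at 0
    have h0 : (0:ℂ) ∈ Metric.ball (0:ℂ) 1 := by simp
    have hgc : ContinuousAt g 0 :=
      (hgd.differentiableAt (hball.mem_nhds h0)).continuousAt
    set F : ℂ → ℝ := fun z => (1 + z * g z).re -
      (α + (1 / (4 * (1 - α))) * (1 - ‖z‖ ^ 2) * ‖g z‖ ^ 2) with hF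
    have hFc : ContinuousAt F 0 := by
      apply ContinuousAt.sub
      · exact Complex.continuous_re.continuousAt.comp
          (continuousAt_const.add (continuousAt_id.mul hgc))
      · apply ContinuousAt.add continuousAt_const
        apply ContinuousAt.mul
        apply ContinuousAt.mul continuousAt_const
        · exact continuousAt_const.sub ((continuous_norm.continuousAt).pow 2)
        · exact ((continuous_norm.continuousAt.comp hgc)).pow 2
    have hne : (𝓝[Metric.ball (0:ℂ) 1 \ {0}] 0).NeBot := by
      have heq : Metric.ball (0:ℂ) 1 \ {0} = Metric.ball (0:ℂ) 1 ∩ {(0:ℂ)}ᶜ := rfl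
      rw [heq, nhdsWithin_inter_of_mem (nhdsWithin_le_nhds (hball.mem_nhds h0))]
      exact inferInstance
    have hev : ∀ᶠ x in 𝓝[Metric.ball (0:ℂ) 1 \ {0}] 0, 0 ≤ F x := by
      filter_upwards [self_mem_nhdsWithin] with x hx
      have := key x hx.1 hx.2
      simp only [hF]
      linarith
    have htend : Filter.Tendsto F (𝓝[Metric.ball (0:ℂ) 1 \ {0}] 0) (𝓝 (F 0)) :=
      (hFc.continuousWithinAt).tendsto
    haveI := hne
    have hF0 : 0 ≤ F 0 := ge_of_tendsto htend hev
    simp only [hF] at hF0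
    linarith
  · exact key z hz hz0
end

section
/- If f is holomorphic and locally univalent on the unit disk and convex of order α (0 ≤ α < 1), then for all z in the unit disk, |(1-|z|²)·f''(z)/f'(z) - 2(1-α)·conj(z)| ≤ 2(1-α). -/
open Topology Filter

lemma key_alg (w : ℂ) (r : ℝ) (hr0 : 0 ≤ r) (hr1 : r ≤ 1)
    (h : ‖w - 1‖ ≤ r * ‖w + 1‖) :
    ‖((1 - r ^ 2 : ℝ) : ℂ) * w - ((1 + r ^ 2 : ℝ) : ℂ)‖ ≤ 2 * r := by
  have h2 : (‖w - 1‖) ^ 2 ≤ (r * ‖w + 1‖) ^ 2 := by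
    nlinarith [norm_nonneg (w + 1), norm_nonneg (w - 1)]
  rw [mul_pow, Complex.sq_norm, Complex.sq_norm] at h2
  have hsq : (‖((1 - r ^ 2 : ℝ) : ℂ) * w - ((1 + r ^ 2 : ℝ) : ℂ)‖) ^ 2
      ≤ (2 * r) ^ 2 := by
    rw [Complex.sq_norm]
    simp only [Complex.normSq_apply, Complex.sub_re, Complex.sub_im, Complex.add_re,
      Complex.add_im, Complex.mul_re, Complex.mul_im, Complex.ofReal_re, Complex.ofReal_im,
      Complex.one_re, Complex.one_im] at h2 ⊢
    have h3 : 0 ≤ 1 - r ^ 2 := by nlinarith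
    nlinarith [mul_nonneg h3 (sub_nonneg.2 h2)]
  nlinarith [norm_nonneg (((1 - r ^ 2 : ℝ) : ℂ) * w - ((1 + r ^ 2 : ℝ) : ℂ)), hr0]

lemma re_pos_abs_lt (w : ℂ) (h : 0 < w.re) :
    ‖w - 1‖ < ‖w + 1‖ := by
  have h2 : Complex.normSq (w - 1) < Complex.normSq (w + 1) := by
    simp only [Complex.normSq_apply, Complex.sub_re, Complex.sub_im, Complex.add_re,
      Complex.add_im, Complex.one_re, Complex.one_im]
    nlinarith
  have := Complex.sq_norm (w - 1)
  have := Complex.sq_norm (w + 1)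
  nlinarith [norm_nonneg (w - 1), norm_nonneg (w + 1)]

theorem convex_order_alpha_preSchwarzian_bound
    (f : ℂ → ℂ) (α : ℝ) (hα0 : 0 ≤ α) (hα1 : α < 1)
    (hf : DifferentiableOn ℂ f (Metric.ball 0 1))
    (hf' : ∀ z ∈ Metric.ball (0:ℂ) 1, deriv f z ≠ 0)
    (hconv : ∀ z ∈ Metric.ball (0:ℂ) 1,
      α < (1 + z * (deriv (deriv f) z / deriv f z)).re) :
    ∀ z ∈ Metric.ball (0:ℂ) 1,
      ‖((1 - ‖z‖ ^ 2 : ℝ) : ℂ) * (deriv (deriv f) z / deriv f z)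
          - 2 * (1 - (α : ℂ)) * (starRingEnd ℂ) z‖ ≤ 2 * (1 - α) := by
  have hBo : IsOpen (Metric.ball (0:ℂ) 1) := Metric.isOpen_ball
  have hfa : AnalyticOnNhd ℂ f (Metric.ball 0 1) := hf.analyticOnNhd hBo
  have h1 : AnalyticOnNhd ℂ (deriv f) (Metric.ball 0 1) := hfa.deriv
  have h2 : AnalyticOnNhd ℂ (deriv (deriv f)) (Metric.ball 0 1) := h1.deriv
  set Q : ℂ → ℂ := fun z => deriv (deriv f) z / deriv f z with hQdef
  have hQd : ∀ z ∈ Metric.ball (0:ℂ) 1, DifferentiableAt ℂ Q z := fun z hz =>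
    ((h2 z hz).differentiableAt).div ((h1 z hz).differentiableAt) (hf' z hz)
  have hαC : ((1:ℂ) - α) ≠ 0 := by
    intro h
    have : (1:ℝ) - α = 0 := by exact_mod_cast congrArg Complex.re h
    linarith
  set g : ℂ → ℂ := fun z => ((1:ℂ) + z * Q z - α) / (1 - α) with hgdef
  have hgd : DifferentiableOn ℂ g (Metric.ball 0 1) := by
    intro z hz
    exact (((differentiableAt_const _).add
      ((differentiableAt_id).mul (hQd z hz))).sub (differentiableAt_const _)).div_const _
      |>.differentiableWithinAt
  have hgre : ∀ z ∈ Metric.ball (0:ℂ) 1, 0 < (g z).re := by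
    intro z hz
    have h := hconv z hz
    have : g z = (((1 + z * Q z - α) : ℂ)) / (((1 - α : ℝ)) : ℂ) := by
      simp [hgdef]
    rw [this, Complex.div_ofReal_re]
    have hre : ((1:ℂ) + z * Q z - α).re = (1 + z * Q z).re - α := by
      simp [Complex.sub_re]
    rw [hre]
    exact div_pos (by linarith) (by linarith)
  have hg0 : g 0 = 1 := by
    simp only [hgdef]
    rw [zero_mul, add_zero, div_self hαC]
  have hden : ∀ z ∈ Metric.ball (0:ℂ) 1, g z + 1 ≠ 0 := by
    intro z hz h
    have := hgre z hz
    have : (g z + 1).re = (g z).re + 1 := by simp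
    rw [h] at this
    simp at this
    linarith
  set φ : ℂ → ℂ := fun z => (g z - 1) / (g z + 1) with hφdef
  have hφd : DifferentiableOn ℂ φ (Metric.ball 0 1) := by
    intro z hz
    exact (((hgd z hz).sub (differentiableWithinAt_const _)).div
      ((hgd z hz).add (differentiableWithinAt_const _)) (hden z hz))
  have hmaps : Set.MapsTo φ (Metric.ball 0 1) (Metric.ball 0 1) := by
    intro z hz
    rw [Metric.mem_ball, dist_zero_right, hφdef]
    rw [norm_div]
    rw [div_lt_one (by
      have := hden z hz
      exact (norm_pos_iff.mpr this))]
    exact re_pos_abs_lt (g z) (hgre z hz)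
  have hφ0 : φ 0 = 0 := by
    simp [hφdef, hg0]
  have schwarz : ∀ z ∈ Metric.ball (0:ℂ) 1, ‖φ z‖ ≤ ‖z‖ := by
    intro z hz
    exact Complex.norm_le_norm_of_mapsTo_ball hφd (hmaps.mono_right Metric.ball_subset_closedBall) hφ0
      (by simpa using Metric.mem_ball.1 hz)
  -- key estimate
  have keyest : ∀ z ∈ Metric.ball (0:ℂ) 1,
      ‖g z - 1‖ ≤ ‖z‖ * ‖g z + 1‖ := by
    intro z hz
    have h := schwarz z hz
    have heq : g z - 1 = φ z * (g z + 1) := (div_mul_cancel₀ _ (hden z hz)).symm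
    rw [heq, norm_mul]
    exact mul_le_mul_of_nonneg_right h (norm_nonneg _)
  -- the bound
  have keybnd : ∀ z ∈ Metric.ball (0:ℂ) 1,
      ‖((1 - (‖z‖) ^ 2 : ℝ) : ℂ) * g z
        - ((1 + (‖z‖) ^ 2 : ℝ) : ℂ)‖ ≤ 2 * ‖z‖ := by
    intro z hz
    refine key_alg (g z) (‖z‖) (norm_nonneg z) ?_ (keyest z hz)
    have : ‖z‖ < 1 := by simpa [Complex.dist_eq] using Metric.mem_ball.1 hz
    linarith
  -- translate to goal for z ≠ 0
  have main : ∀ z ∈ Metric.ball (0:ℂ) 1, z ≠ 0 →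
      ‖((1 - ‖z‖ ^ 2 : ℝ) : ℂ) * Q z
          - 2 * (1 - (α : ℂ)) * (starRingEnd ℂ) z‖ ≤ 2 * (1 - α) := by
    intro z hz hz0
    have hzQ : z * Q z = ((1:ℂ) - α) * (g z - 1) := by
      have : ((1:ℂ) - α) * g z = 1 + z * Q z - α := by
        rw [hgdef]
        field_simp
      rw [mul_sub, this]
      ring
    have hzconj : z * (starRingEnd ℂ) z = ((‖z‖ ^ 2 : ℝ) : ℂ) := by
      rw [Complex.mul_conj]
      rw [Complex.sq_norm]
    have hmul : z * (((1 - ‖z‖ ^ 2 : ℝ) : ℂ) * Q z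
          - 2 * (1 - (α : ℂ)) * (starRingEnd ℂ) z)
        = ((1:ℂ) - α) * (((1 - (‖z‖) ^ 2 : ℝ) : ℂ) * g z
            - ((1 + (‖z‖) ^ 2 : ℝ) : ℂ)) := by
      push_cast at hzconj ⊢
      linear_combination (1 - (‖z‖ : ℂ) ^ 2) * hzQ
        - 2 * (1 - (α : ℂ)) * hzconj
    have habs := congrArg (‖·‖) hmul
    rw [norm_mul, norm_mul] at habs
    have hzabs : 0 < ‖z‖ := norm_pos_iff.mpr hz0
    have hb := keybnd z hz
    have h1α : ‖(1:ℂ) - α‖ = 1 - α := by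
      rw [show ((1:ℂ) - α) = (((1 - α : ℝ)) : ℂ) by push_cast; ring]
      rw [Complex.norm_real, Real.norm_eq_abs, abs_of_pos (by linarith)]
    rw [h1α] at habs
    have : ‖z‖ * ‖((1 - ‖z‖ ^ 2 : ℝ) : ℂ) * Q z
          - 2 * (1 - (α : ℂ)) * (starRingEnd ℂ) z‖ ≤ ‖z‖ * (2 * (1 - α)) := by
      rw [habs]
      calc (1 - α) * ‖((1 - (‖z‖) ^ 2 : ℝ) : ℂ) * g z
            - ((1 + (‖z‖) ^ 2 : ℝ) : ℂ)‖
          ≤ (1 - α) * (2 * ‖z‖) := by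
            exact mul_le_mul_of_nonneg_left hb (by linarith)
        _ = ‖z‖ * (2 * (1 - α)) := by ring
    exact le_of_mul_le_mul_left this hzabs
  -- conclude, handling z = 0 by continuity
  intro z hz
  rcases eq_or_ne z 0 with rfl | hz0
  · set F : ℂ → ℝ := fun w => ‖((1 - ‖w‖ ^ 2 : ℝ) : ℂ) * Q w
        - 2 * (1 - (α : ℂ)) * (starRingEnd ℂ) w‖ with hFdef
    show F 0 ≤ 2 * (1 - α)
    have hFc : ContinuousAt F 0 := by
      have hQc : ContinuousAt Q 0 := (hQd 0 (by simp)).continuousAt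
      apply continuous_norm.continuousAt.comp
      apply ContinuousAt.sub
      · exact (Complex.continuous_ofReal.continuousAt.comp
          ((continuous_const.sub (continuous_norm.pow 2)).continuousAt)).mul hQc
      · exact (continuous_const.mul Complex.continuous_conj).continuousAt
    have heq : 𝓝[(Metric.ball (0:ℂ) 1) ∩ {(0:ℂ)}ᶜ] (0:ℂ) = 𝓝[{(0:ℂ)}ᶜ] (0:ℂ) :=
      nhdsWithin_inter_of_mem (mem_nhdsWithin_of_mem_nhds (hBo.mem_nhds (by simp)))
    haveI hne : (𝓝[(Metric.ball (0:ℂ) 1) ∩ {(0:ℂ)}ᶜ] (0:ℂ)).NeBot := by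
      rw [heq]; infer_instance
    refine le_of_tendsto
      ((hFc.continuousWithinAt (s := (Metric.ball (0:ℂ) 1) ∩ {(0:ℂ)}ᶜ)).tendsto) ?_
    filter_upwards [self_mem_nhdsWithin] with w hw
    exact main w hw.1 hw.2
  · exact main z hz hz0
end

section
/- If f is holomorphic and locally univalent on the unit disk with Re(1 + z f''(z)/f'(z)) ≥ α + (1/(4(1-α)))·(1-|z|²)·|f''(z)/f'(z)|² for all z in the unit disk, where 0 ≤ α < 1, then |(1-|z|²)·f''(z)/f'(z) - 2(1-α)·conj(z)| ≤ 2(1-α) for all z in the unit disk, and conversely. -/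
theorem convex_order_alpha_ineq_equivalence
    (f : ℂ → ℂ) (α : ℝ) (hα0 : 0 ≤ α) (hα1 : α < 1)
    (hf : DifferentiableOn ℂ f (Metric.ball 0 1))
    (hf' : ∀ z ∈ Metric.ball (0:ℂ) 1, deriv f z ≠ 0) :
    ∀ z ∈ Metric.ball (0:ℂ) 1,
      (α + (1 / (4 * (1 - α))) * (1 - ‖z‖ ^ 2) *
          ‖deriv (deriv f) z / deriv f z‖ ^ 2
        ≤ (1 + z * (deriv (deriv f) z / deriv f z)).re)
      ↔
      (‖((1 - ‖z‖ ^ 2 : ℝ) : ℂ) * (deriv (deriv f) z / deriv f z)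
          - 2 * (1 - (α : ℂ)) * (starRingEnd ℂ) z‖ ≤ 2 * (1 - α)) := by
  intro z hz
  have hβ : 0 < 1 - α := by linarith
  have hzabs : ‖z‖ < 1 := by
    simpa [Complex.dist_eq] using hz
  have hρ1 : ‖z‖ ^ 2 < 1 := by
    nlinarith [norm_nonneg z]
  set w : ℂ := deriv (deriv f) z / deriv f z with hw
  set x : ℝ := w.re
  set y : ℝ := w.im
  set u : ℝ := z.re
  set v : ℝ := z.im
  set ρ : ℝ := ‖z‖ ^ 2 with hρdef
  have habs : ρ = u ^ 2 + v ^ 2 := by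
    rw [hρdef, Complex.sq_norm, Complex.normSq_apply]; ring
  have habsw : ‖w‖ ^ 2 = x ^ 2 + y ^ 2 := by
    rw [Complex.sq_norm, Complex.normSq_apply]; ring
  have key : ‖((1 - ρ : ℝ) : ℂ) * w
        - 2 * (1 - (α : ℂ)) * (starRingEnd ℂ) z‖ ≤ 2 * (1 - α)
      ↔ ‖((1 - ρ : ℝ) : ℂ) * w
        - 2 * (1 - (α : ℂ)) * (starRingEnd ℂ) z‖ ^ 2 ≤ (2 * (1 - α)) ^ 2 := by
    constructor
    · intro h
      exact pow_le_pow_left₀ (norm_nonneg _) h 2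
    · intro h
      nlinarith [norm_nonneg (((1 - ρ : ℝ) : ℂ) * w
        - 2 * (1 - (α : ℂ)) * (starRingEnd ℂ) z)]
  have hre : (((1 - ρ : ℝ) : ℂ) * w - 2 * (1 - (α : ℂ)) * (starRingEnd ℂ) z).re
      = (1 - ρ) * x - 2 * (1 - α) * u := by
    simp [Complex.sub_re, Complex.mul_re, Complex.mul_im]; rfl
  have him : (((1 - ρ : ℝ) : ℂ) * w - 2 * (1 - (α : ℂ)) * (starRingEnd ℂ) z).im
      = (1 - ρ) * y + 2 * (1 - α) * v := by
    simp [Complex.sub_im, Complex.mul_re, Complex.mul_im]; rfl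
  have hzw : (1 + z * w).re = 1 + (u * x - v * y) := by
    simp [Complex.add_re, Complex.mul_re]; rfl
  rw [key, hzw, habsw, Complex.sq_norm, Complex.normSq_apply, hre, him]
  have h1ρ : 0 < 1 - ρ := by linarith
  have h4pos : (0:ℝ) < 4 * (1 - α) := by linarith
  have e : 1 / (4 * (1 - α)) * (1 - ρ) * (x ^ 2 + y ^ 2)
      = ((1 - ρ) * (x ^ 2 + y ^ 2)) / (4 * (1 - α)) := by ring
  rw [e, show α + ((1 - ρ) * (x ^ 2 + y ^ 2)) / (4 * (1 - α)) ≤ 1 + (u * x - v * y)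
      ↔ ((1 - ρ) * (x ^ 2 + y ^ 2)) / (4 * (1 - α)) ≤ (1 + (u * x - v * y)) - α from
      ⟨fun h => by linarith, fun h => by linarith⟩,
    div_le_iff₀ h4pos]
  constructor
  · intro h
    nlinarith [mul_le_mul_of_nonneg_left h (le_of_lt h1ρ), habs, mul_pos hβ h1ρ]
  · intro h
    nlinarith [h, habs, mul_pos hβ h1ρ, h1ρ]
end

section
/- If f is convex of order α (0 ≤ α < 1) on the unit disk and additionally f''(0)=0, then for all z in the unit disk, (1-|z|²)·|f''(z)/f'(z)| ≤ 2|z|(1-α). -/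
open Metric Set Complex

theorem convex_order_alpha_zero_second_deriv_preSchwarzian
    (f : ℂ → ℂ) (α : ℝ) (hα0 : 0 ≤ α) (hα1 : α < 1)
    (hf : DifferentiableOn ℂ f (Metric.ball 0 1))
    (hf' : ∀ z ∈ Metric.ball (0:ℂ) 1, deriv f z ≠ 0)
    (hf0 : f 0 = 0) (hf1 : deriv f 0 = 1) (hf2 : deriv (deriv f) 0 = 0)
    (hconv : ∀ z ∈ Metric.ball (0:ℂ) 1,
      α < (1 + z * (deriv (deriv f) z / deriv f z)).re) :
    ∀ z ∈ Metric.ball (0:ℂ) 1,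
      (1 - ‖z‖ ^ 2) * ‖deriv (deriv f) z / deriv f z‖
        ≤ 2 * ‖z‖ * (1 - α) := by
  intro z hz
  have hopen : IsOpen (Metric.ball (0:ℂ) 1) := Metric.isOpen_ball
  have h0mem : (0:ℂ) ∈ Metric.ball (0:ℂ) 1 := by simp
  have hA : AnalyticOnNhd ℂ f (Metric.ball 0 1) := hf.analyticOnNhd hopen
  have hA1 : AnalyticOnNhd ℂ (deriv f) (Metric.ball 0 1) := hA.deriv
  have hA2 : AnalyticOnNhd ℂ (deriv (deriv f)) (Metric.ball 0 1) := hA1.deriv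
  set g : ℂ → ℂ := fun z => deriv (deriv f) z / deriv f z with hgdef
  have hgd : DifferentiableOn ℂ g (Metric.ball 0 1) :=
    hA2.differentiableOn.div hA1.differentiableOn hf'
  have hg0 : g 0 = 0 := by simp [hgdef, hf1, hf2]
  set c : ℂ := 2 - 2*α with hcdef
  have hc_re : c.re = 2 - 2*α := by simp [hcdef]
  have hc_im : c.im = 0 := by simp [hcdef]
  have hc_pos : (0:ℝ) < 2 - 2*α := by linarith
  set q : ℂ → ℂ := fun z => z * g z + c with hqdef
  have hq_re_eq : ∀ x : ℂ, (q x).re = (x * g x).re + (2 - 2*α) := by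
    intro x
    have h1 : (q x).re = (x * g x).re + c.re := rfl
    rw [h1, hc_re]
  have hq_im_eq : ∀ x : ℂ, (q x).im = (x * g x).im := by
    intro x
    have h1 : (q x).im = (x * g x).im + c.im := rfl
    rw [h1, hc_im, add_zero]
  have hq_re : ∀ x ∈ Metric.ball (0:ℂ) 1, (x * g x).re > α - 1 := by
    intro x hx
    have h2 := hconv x hx
    have h3 : (1 + x * (deriv (deriv f) x / deriv f x)).re = 1 + (x * g x).re := by
      rw [Complex.add_re, Complex.one_re]
    rw [h3] at h2
    linarith
  have hq_ne : ∀ x ∈ Metric.ball (0:ℂ) 1, q x ≠ 0 := by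
    intro x hx h
    have h1 := hq_re x hx
    have h2 : (q x).re = 0 := by rw [h]; rfl
    rw [hq_re_eq x] at h2
    linarith
  have hqd : DifferentiableOn ℂ q (Metric.ball 0 1) :=
    ((differentiableOn_id).mul hgd).add_const c
  set w : ℂ → ℂ := fun z => z * g z / q z with hwdef
  have hwd : DifferentiableOn ℂ w (Metric.ball 0 1) :=
    ((differentiableOn_id).mul hgd).div hqd hq_ne
  have hw0 : w 0 = 0 := by simp [hwdef]
  -- |w| < 1
  have habslt : ∀ x ∈ Metric.ball (0:ℂ) 1,
      ‖x * g x‖ < ‖q x‖ := by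
    intro x hx
    have h1 := hq_re x hx
    have key : Complex.normSq (x * g x) < Complex.normSq (q x) := by
      rw [Complex.normSq_apply, Complex.normSq_apply, hq_re_eq x, hq_im_eq x]
      nlinarith [h1]
    rw [Complex.norm_def, Complex.norm_def]
    exact Real.sqrt_lt_sqrt (Complex.normSq_nonneg _) key
  have hwlt : ∀ x ∈ Metric.ball (0:ℂ) 1, ‖w x‖ < 1 := by
    intro x hx
    have hq0 : 0 < ‖q x‖ := norm_pos_iff.mpr (hq_ne x hx)
    rw [hwdef]
    simp only [norm_div]
    exact (div_lt_one hq0).2 (habslt x hx)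
  -- deriv w 0 = 0
  have hgat0 : DifferentiableAt ℂ g 0 := hgd.differentiableAt (hopen.mem_nhds h0mem)
  have hh : HasDerivAt (fun y : ℂ => y * g y) (1 * g 0 + 0 * deriv g 0) 0 :=
    (hasDerivAt_id 0).mul hgat0.hasDerivAt
  have hh0 : HasDerivAt (fun y : ℂ => y * g y) 0 0 := by
    simpa [hg0] using hh
  have hqh : HasDerivAt q 0 0 := by
    exact hh0.add_const c
  have hwh : HasDerivAt w (((0 : ℂ) * q 0 - (0 * g 0) * 0) / q 0 ^ 2) 0 :=
    hh0.div hqh (hq_ne 0 h0mem)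
  have hdw0 : deriv w 0 = 0 := by
    have := hwh.deriv
    simpa using this
  -- first Schwarz application
  have hmaps : Set.MapsTo w (Metric.ball (0:ℂ) 1) (Metric.ball (w 0) 1) := by
    intro x hx
    rw [hw0, Metric.mem_ball, dist_zero_right]
    exact hwlt x hx
  have hv_le : ∀ x ∈ Metric.ball (0:ℂ) 1, ‖dslope w 0 x‖ ≤ 1 := by
    intro x hx
    have := Complex.norm_dslope_le_div_of_mapsTo_ball hwd (hmaps.mono_right Metric.ball_subset_closedBall) hx
    simpa using this
  have hvd : DifferentiableOn ℂ (dslope w 0) (Metric.ball 0 1) :=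
    (Complex.differentiableOn_dslope (hopen.mem_nhds h0mem)).2 hwd
  have hv0 : dslope w 0 0 = 0 := by rw [dslope_same]; exact hdw0
  -- second Schwarz application with radius trick
  have hdv_le : ∀ x ∈ Metric.ball (0:ℂ) 1,
      ‖dslope (dslope w 0) 0 x‖ ≤ 1 := by
    intro x hx
    have key : ∀ R : ℝ, 1 < R → ‖dslope (dslope w 0) 0 x‖ ≤ R := by
      intro R hR
      have hmaps2 : Set.MapsTo (dslope w 0) (Metric.ball (0:ℂ) 1)
          (Metric.ball (dslope w 0 0) R) := by
        intro y hy
        rw [hv0, Metric.mem_ball, dist_zero_right]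
        exact lt_of_le_of_lt (hv_le y hy) hR
      have := Complex.norm_dslope_le_div_of_mapsTo_ball hvd (hmaps2.mono_right Metric.ball_subset_closedBall) hx
      simpa using this
    by_contra h
    push_neg at h
    have := key ((1 + ‖dslope (dslope w 0) 0 x‖) / 2) (by linarith)
    linarith
  -- |w z| ≤ |z|^2
  have hwz2 : ‖w z‖ ≤ ‖z‖ ^ 2 := by
    rcases eq_or_ne z 0 with rfl | hz0
    · simp [hw0]
    · have h1 : dslope w 0 z = w z / z := by
        rw [dslope_of_ne _ hz0, slope_def_field, hw0]
        simp
      have h2 : dslope (dslope w 0) 0 z = (w z / z) / z := by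
        rw [dslope_of_ne _ hz0, slope_def_field, hv0, h1]
        simp
      have h3 := hdv_le z hz
      rw [h2] at h3
      have hza : 0 < ‖z‖ := norm_pos_iff.mpr hz0
      rw [norm_div, norm_div, div_div] at h3
      rw [div_le_one (by positivity)] at h3
      calc ‖w z‖ ≤ ‖z‖ * ‖z‖ := h3
        _ = ‖z‖ ^ 2 := by ring
  -- conclude
  rcases eq_or_ne z 0 with rfl | hz0
  · show (1 - ‖0‖ ^ 2) * ‖g 0‖ ≤ 2 * ‖0‖ * (1 - α)
    simp [hg0]
  · have hza : 0 < ‖z‖ := norm_pos_iff.mpr hz0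
    have hqz : q z ≠ 0 := hq_ne z hz
    have h1w : (1:ℂ) - w z ≠ 0 := by
      intro h
      have hw1 : w z = 1 := by linear_combination -h
      have h5 := hwlt z hz
      rw [hw1] at h5
      simp at h5
    have hiden : z * g z * (1 - w z) = c * w z := by
      rw [hwdef]
      field_simp
      ring
    have h1wpos : 0 < ‖1 - w z‖ := norm_pos_iff.mpr h1w
    have habsc : ‖c‖ = 2 - 2*α := by
      rw [hcdef, show ((2:ℂ) - 2*α) = ((2 - 2*α : ℝ) : ℂ) by push_cast; ring,
        Complex.norm_real, Real.norm_eq_abs, abs_of_pos hc_pos]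
    have habs_iden : ‖z‖ * ‖g z‖ * ‖1 - w z‖
        = (2 - 2*α) * ‖w z‖ := by
      have h6 := congrArg (‖·‖) hiden
      rw [norm_mul, norm_mul, norm_mul, habsc] at h6
      exact h6
    set a := ‖z‖ with ha
    set b := ‖w z‖ with hb
    set m := ‖1 - w z‖ with hm
    have hblt : b < 1 := hwlt z hz
    have hb2 : b ≤ a ^ 2 := hwz2
    have hbnn : 0 ≤ b := norm_nonneg _
    have h1wge : 1 - b ≤ m := by
      have h7 := norm_sub_norm_le (1:ℂ) (w z)
      simpa [hb, hm] using h7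
    have ha1 : a < 1 := by
      rw [ha]
      simpa [Complex.dist_eq] using hz
    have hkey : (1 - a^2) * b ≤ a^2 * m := by
      nlinarith
    have hgabs : a * ‖g z‖ = (2 - 2*α) * b / m := by
      rw [eq_div_iff h1wpos.ne']
      exact habs_iden
    show (1 - a ^ 2) * ‖g z‖ ≤ 2 * a * (1 - α)
    rw [← mul_le_mul_iff_of_pos_left hza]
    calc a * ((1 - a^2) * ‖g z‖)
        = (1 - a^2) * (a * ‖g z‖) := by ring
      _ = (1 - a^2) * ((2 - 2*α) * b / m) := by rw [hgabs]
      _ = ((1 - a^2) * ((2 - 2*α) * b)) / m := by ring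
      _ ≤ a * (2 * a * (1 - α)) := by
          rw [div_le_iff₀ h1wpos]
          nlinarith [mul_le_mul_of_nonneg_left hkey hc_pos.le]
end

section
/- If f is convex of order α (0 ≤ α < 1) on the unit disk with f''(0)=0, then for all z in the unit disk, 1/(1+|z|²)^{1-α} ≤ |f'(z)| ≤ 1/(1-|z|²)^{1-α}. -/
open Metric Set Complex Filter

lemma my_diffOn_dslope {f : ℂ → ℂ} {R : ℝ} (hR : 0 < R)
    (h : DifferentiableOn ℂ f (ball 0 R)) :
    DifferentiableOn ℂ (dslope f 0) (ball 0 R) := by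
  intro w hw
  rcases eq_or_ne w 0 with rfl | hne
  · obtain ⟨p, hp⟩ := (h.analyticOnNhd isOpen_ball) 0 (mem_ball_self hR)
    exact hp.has_fpower_series_dslope_fslope.analyticAt.differentiableAt.differentiableWithinAt
  · exact (differentiableWithinAt_dslope_of_ne hne).2 (h w hw)

lemma schwarz_double {ω : ℂ → ℂ}
    (hd : DifferentiableOn ℂ ω (ball 0 1))
    (hmaps : Set.MapsTo ω (ball 0 1) (ball 0 1))
    (h0 : ω 0 = 0) (h1 : deriv ω 0 = 0)
    {z : ℂ} (hz : z ∈ ball (0:ℂ) 1) :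
    ‖ω z‖ ≤ ‖z‖ ^ 2 := by
  rcases eq_or_ne z 0 with rfl | hzne
  · simp [h0]
  have hz1 : ‖z‖ < 1 := mem_ball_zero_iff.1 hz
  have habsz : 0 < ‖z‖ := norm_pos_iff.mpr hzne
  set φ := dslope ω 0 with hφdef
  have hφd : DifferentiableOn ℂ φ (ball 0 1) := my_diffOn_dslope one_pos hd
  have hφ0 : φ 0 = 0 := by rw [hφdef, dslope_same, h1]
  have hφle : ∀ w ∈ ball (0:ℂ) 1, ‖φ w‖ ≤ 1 := by
    intro w hw
    have := Complex.norm_dslope_le_div_of_mapsTo_ball hd (by simpa [h0] using hmaps.mono_right ball_subset_closedBall) hw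
    simpa using this
  have key : ∀ t : ℝ, ‖z‖ < t → t < 1 →
      ‖ω z‖ ≤ ‖z‖ ^ 2 / t ^ 2 := by
    intro t hzt ht1
    have ht0 : 0 < t := lt_of_le_of_lt (norm_nonneg z) hzt
    have hsub : ball (0:ℂ) t ⊆ ball 0 1 := ball_subset_ball ht1.le
    have hmaps2 : Set.MapsTo φ (ball 0 t) (ball (φ 0) (1/t)) := by
      intro w hw
      rw [mem_ball, hφ0, dist_zero_right]
      refine lt_of_le_of_lt (hφle w (hsub hw)) ?_
      rw [lt_div_iff₀ ht0]; linarith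
    have hz' : z ∈ ball (0:ℂ) t := by rwa [mem_ball_zero_iff]
    have hb := Complex.norm_dslope_le_div_of_mapsTo_ball (hφd.mono hsub) (hmaps2.mono_right ball_subset_closedBall) hz'
    rw [dslope_of_ne _ hzne, slope_def_field, hφ0, sub_zero, sub_zero] at hb
    rw [hφdef, dslope_of_ne _ hzne, slope_def_field, h0, sub_zero, sub_zero] at hb
    rw [norm_div, norm_div] at hb
    rw [div_div, div_div, div_le_div_iff₀ (by positivity) (by positivity)] at hb
    rw [le_div_iff₀ (by positivity)]
    nlinarith [hb]
  have hl : Tendsto (fun t:ℝ => ‖z‖ ^ 2 / t ^ 2) (nhdsWithin 1 (Iio 1)) (nhds (‖z‖ ^ 2)) := by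
    have h2 : Tendsto (fun t:ℝ => ‖z‖ ^ 2 / t ^ 2) (nhds 1) (nhds (‖z‖ ^2 / 1 ^ 2)) :=
      Tendsto.div tendsto_const_nhds ((continuous_pow 2).tendsto 1) (by norm_num)
    simpa using h2.mono_left nhdsWithin_le_nhds
  refine ge_of_tendsto hl ?_
  filter_upwards [Ioo_mem_nhdsLT_of_mem ⟨hz1, le_refl 1⟩] with t ht
  exact key t ht.1 ht.2


lemma re_div_one_sub_bounds {w : ℂ} {s : ℝ} (hws : ‖w‖ ≤ s) (hs : s < 1) :
    -(s / (1 + s)) ≤ (w / (1 - w)).re ∧ (w / (1 - w)).re ≤ s / (1 - s) := by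
  have hs0 : 0 ≤ s := le_trans (norm_nonneg w) hws
  have hsq : w.re ^ 2 + w.im ^ 2 ≤ s ^ 2 := by
    have h1 : ‖w‖ ^ 2 ≤ s ^ 2 := by nlinarith [norm_nonneg w]
    rwa [Complex.sq_norm, Complex.normSq_apply, ← pow_two, ← pow_two] at h1
  have ha : |w.re| ≤ s := le_trans (Complex.abs_re_le_norm w) hws
  obtain ⟨ha1, ha2⟩ := abs_le.1 ha
  have hd : 0 < (1 - w.re) ^ 2 + w.im ^ 2 := by nlinarith
  have hre : (w / (1 - w)).re
      = (w.re - (w.re ^ 2 + w.im ^ 2)) / ((1 - w.re) ^ 2 + w.im ^ 2) := by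
    rw [Complex.div_re, Complex.normSq_apply]
    simp only [Complex.sub_re, Complex.sub_im, Complex.one_re, Complex.one_im]
    rw [← add_div]
    ring_nf
  rw [hre]
  constructor
  · rw [neg_le, ← neg_div, div_le_div_iff₀ hd (by linarith)]
    nlinarith [mul_nonneg (by linarith : (0:ℝ) ≤ 1 - s) (by linarith : (0:ℝ) ≤ w.re + s)]
  · rw [div_le_div_iff₀ hd (by linarith)]
    nlinarith [mul_nonneg (by linarith : (0:ℝ) ≤ s - w.re) (by linarith : (0:ℝ) ≤ 1 - w.re)]

lemma mono_of_deriv_le {u U u' U' : ℝ → ℝ}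
    (hu : ∀ t ∈ Set.Icc (0:ℝ) 1, HasDerivAt u (u' t) t)
    (hU : ∀ t ∈ Set.Icc (0:ℝ) 1, HasDerivAt U (U' t) t)
    (hle : ∀ t ∈ Set.Icc (0:ℝ) 1, u' t ≤ U' t) :
    u 1 - u 0 ≤ U 1 - U 0 := by
  have h : MonotoneOn (fun t => U t - u t) (Set.Icc 0 1) := by
    apply monotoneOn_of_deriv_nonneg (convex_Icc 0 1)
    · intro t ht
      exact ((hU t ht).sub (hu t ht)).continuousAt.continuousWithinAt
    · intro t ht
      rw [interior_Icc] at ht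
      exact ((hU t (Ioo_subset_Icc_self ht)).sub
        (hu t (Ioo_subset_Icc_self ht))).differentiableAt.differentiableWithinAt
    · intro t ht
      rw [interior_Icc] at ht
      rw [show deriv (fun t => U t - u t) t = U' t - u' t from
        ((hU t (Ioo_subset_Icc_self ht)).sub (hu t (Ioo_subset_Icc_self ht))).deriv]
      linarith [hle t (Ioo_subset_Icc_self ht)]
  have h2 := h (Set.left_mem_Icc.2 zero_le_one) (Set.right_mem_Icc.2 zero_le_one) zero_le_one
  simp only at h2
  linarith

theorem convex_order_alpha_zero_second_deriv_distortion
    (f : ℂ → ℂ) (α : ℝ) (hα0 : 0 ≤ α) (hα1 : α < 1)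
    (hf : DifferentiableOn ℂ f (Metric.ball 0 1))
    (hf' : ∀ z ∈ Metric.ball (0:ℂ) 1, deriv f z ≠ 0)
    (hf0 : f 0 = 0) (hf1 : deriv f 0 = 1) (hf2 : deriv (deriv f) 0 = 0)
    (hconv : ∀ z ∈ Metric.ball (0:ℂ) 1,
      α < (1 + z * (deriv (deriv f) z / deriv f z)).re) :
    ∀ z ∈ Metric.ball (0:ℂ) 1,
      1 / (1 + ‖z‖ ^ 2) ^ (1 - α) ≤ ‖deriv f z‖ ∧
      ‖deriv f z‖ ≤ 1 / (1 - ‖z‖ ^ 2) ^ (1 - α) := by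
  have hball : IsOpen (ball (0:ℂ) 1) := isOpen_ball
  set g : ℂ → ℂ := deriv f with hgdef
  have hfa : AnalyticOnNhd ℂ f (ball 0 1) := hf.analyticOnNhd hball
  have hg : DifferentiableOn ℂ g (ball 0 1) := hfa.deriv.differentiableOn
  have hg' : DifferentiableOn ℂ (deriv g) (ball 0 1) := hfa.deriv.deriv.differentiableOn
  have h0mem : (0:ℂ) ∈ ball (0:ℂ) 1 := mem_ball_self one_pos
  set c : ℝ := 2 - 2*α with hcdef
  have hc0 : 0 < c := by rw [hcdef]; linarith
  set B : ℂ → ℂ := fun w => w * (deriv g w / g w) with hBdef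
  set D : ℂ → ℂ := fun w => B w + (c:ℂ) with hDdef
  set ω : ℂ → ℂ := fun w => B w / D w with hωdef
  have hBre : ∀ w ∈ ball (0:ℂ) 1, α - 1 < (B w).re := by
    intro w hw
    have h1 := hconv w hw
    rw [Complex.add_re, Complex.one_re] at h1
    rw [hBdef]; simp only; linarith
  have hDre : ∀ w ∈ ball (0:ℂ) 1, 1 - α < (D w).re := by
    intro w hw
    have h1 := hBre w hw
    rw [hDdef]; simp only [Complex.add_re, Complex.ofReal_re]
    rw [hcdef]; linarith
  have hDne : ∀ w ∈ ball (0:ℂ) 1, D w ≠ 0 := by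
    intro w hw h
    have h1 := hDre w hw
    rw [h, Complex.zero_re] at h1; linarith
  have hBd : DifferentiableOn ℂ B (ball 0 1) :=
    (differentiable_id.differentiableOn).mul (hg'.div hg (fun w hw => hf' w hw))
  have hDd : DifferentiableOn ℂ D (ball 0 1) := hBd.add_const _
  have hωd : DifferentiableOn ℂ ω (ball 0 1) := hBd.div hDd hDne
  have hωlt : ∀ w ∈ ball (0:ℂ) 1, ‖ω w‖ < 1 := by
    intro w hw
    have hb := hBre w hw
    rw [hωdef]; simp only
    rw [norm_div, div_lt_one (norm_pos_iff.mpr (hDne w hw))]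
    rw [Complex.norm_def, Complex.norm_def]
    apply Real.sqrt_lt_sqrt (Complex.normSq_nonneg _)
    rw [hDdef]
    simp only [Complex.normSq_apply, Complex.add_re, Complex.add_im,
      Complex.ofReal_re, Complex.ofReal_im, add_zero]
    nlinarith [mul_pos hc0 (sub_pos.2 hb)]
  have hmaps : Set.MapsTo ω (ball 0 1) (ball 0 1) := by
    intro w hw
    rw [mem_ball_zero_iff]
    exact hωlt w hw
  have hg0 : g 0 = 1 := hf1
  have hg'0 : deriv g 0 = 0 := hf2
  have hω0 : ω 0 = 0 := by rw [hωdef, hBdef]; simp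
  have hBat : HasDerivAt B 0 0 := by
    have hv : DifferentiableAt ℂ (fun w => deriv g w / g w) 0 :=
      (hg'.differentiableAt (hball.mem_nhds h0mem)).div
        (hg.differentiableAt (hball.mem_nhds h0mem)) (by rw [hg0]; exact one_ne_zero)
    have h2 := (hasDerivAt_id (0:ℂ)).mul hv.hasDerivAt
    rw [hBdef]
    simpa [hg'0, Pi.mul_def] using h2
  have hDat : HasDerivAt D 0 0 := by
    rw [hDdef]; simpa using hBat.add_const (c:ℂ)
  have hω1 : deriv ω 0 = 0 := by
    have hB0 : B 0 = 0 := by rw [hBdef]; simp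
    have h2 : HasDerivAt ω 0 0 := by
      rw [hωdef]; simpa [hB0, Pi.div_def] using hBat.div hDat (hDne 0 h0mem)
    exact h2.deriv
  have hωle : ∀ w ∈ ball (0:ℂ) 1, ‖ω w‖ ≤ ‖w‖ ^ 2 :=
    fun w hw => schwarz_double hωd hmaps hω0 hω1 hw
  -- bounds on Re (B w)
  have hReB : ∀ w ∈ ball (0:ℂ) 1,
      -(c * (‖w‖ ^ 2 / (1 + ‖w‖ ^ 2))) ≤ (B w).re ∧
      (B w).re ≤ c * (‖w‖ ^ 2 / (1 - ‖w‖ ^ 2)) := by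
    intro w hw
    have hw1 : ‖w‖ < 1 := mem_ball_zero_iff.1 hw
    have hs1 : ‖w‖ ^ 2 < 1 := by nlinarith [norm_nonneg w]
    have hkey : B w = (c:ℂ) * (ω w / (1 - ω w)) := by
      have hD := hDne w hw
      have hc' : (c:ℂ) ≠ 0 := by
        simpa using Complex.ofReal_ne_zero.2 (ne_of_gt hc0)
      have h1 : (1:ℂ) - ω w = (c:ℂ) / D w := by
        have hD' : B w + (c:ℂ) ≠ 0 := hD
        rw [hωdef, hDdef]; simp only
        rw [eq_div_iff hD', sub_mul, div_mul_cancel₀ _ hD']; ring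
      rw [h1, hωdef]
      field_simp
    have hrecast : (B w).re = c * (ω w / (1 - ω w)).re := by
      rw [hkey, Complex.re_ofReal_mul]
    obtain ⟨hlo, hhi⟩ := re_div_one_sub_bounds (le_trans (hωle w hw) le_rfl) hs1
    rw [hrecast]
    constructor
    · have := mul_le_mul_of_nonneg_left hlo hc0.le
      calc -(c * (‖w‖ ^ 2 / (1 + ‖w‖ ^ 2)))
          = c * (-(‖w‖ ^ 2 / (1 + ‖w‖ ^ 2))) := by ring
        _ ≤ c * (ω w / (1 - ω w)).re := this
    · exact mul_le_mul_of_nonneg_left hhi hc0.le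
  intro z hz
  rcases eq_or_ne z 0 with rfl | hzne
  · constructor <;> simp [hg0, Real.one_rpow]
  · have hr0 : 0 < ‖z‖ := norm_pos_iff.mpr hzne
    have hr1 : ‖z‖ < 1 := mem_ball_zero_iff.1 hz
    set r : ℝ := ‖z‖ with hrdef
    set G : ℝ → ℂ := fun t => g ((t:ℂ) * z) with hGdef
    set u : ℝ → ℝ := fun t => Real.log ((G t).re^2 + (G t).im^2) with hudef
    have hmem : ∀ t ∈ Icc (0:ℝ) 1, ((t:ℂ) * z) ∈ ball (0:ℂ) 1 := by
      intro t ht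
      rw [mem_ball_zero_iff, norm_mul, Complex.norm_real, Real.norm_eq_abs,
        _root_.abs_of_nonneg ht.1]
      calc t * ‖z‖ ≤ 1 * ‖z‖ := by nlinarith [ht.2, hr0]
        _ < 1 := by rw [one_mul]; exact hr1
    have hGne : ∀ t ∈ Icc (0:ℝ) 1, G t ≠ 0 := fun t ht => hf' _ (hmem t ht)
    have hpos : ∀ t ∈ Icc (0:ℝ) 1, 0 < (G t).re^2 + (G t).im^2 := by
      intro t ht
      have h2 := Complex.normSq_pos.2 (hGne t ht)
      rw [Complex.normSq_apply] at h2
      nlinarith [h2]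
    have hu' : ∀ t ∈ Icc (0:ℝ) 1,
        HasDerivAt u (2 * ((z * deriv g ((t:ℂ)*z)) / G t).re) t := by
      intro t ht
      have hmem' := hmem t ht
      have hA : HasDerivAt (fun s : ℝ => (s:ℂ) * z) z t := by
        simpa using (Complex.ofRealCLM.hasDerivAt.mul_const z)
      have hgd : DifferentiableAt ℂ g ((t:ℂ)*z) := hg.differentiableAt (hball.mem_nhds hmem')
      have hG : HasDerivAt G (z * deriv g ((t:ℂ)*z)) t := by
        have h2 := (hgd.hasDerivAt.hasFDerivAt.restrictScalars ℝ).comp_hasDerivAt t hA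
        simpa [hGdef, Function.comp_def, smul_eq_mul, mul_comm] using h2
      have hre : HasDerivAt (fun s => (G s).re) ((z * deriv g ((t:ℂ)*z)).re) t := by
        simpa [Function.comp_def] using Complex.reCLM.hasFDerivAt.comp_hasDerivAt t hG
      have him : HasDerivAt (fun s => (G s).im) ((z * deriv g ((t:ℂ)*z)).im) t := by
        simpa [Function.comp_def] using Complex.imCLM.hasFDerivAt.comp_hasDerivAt t hG
      have hn := (hre.pow 2).add (him.pow 2)
      have hl := hn.log (ne_of_gt (hpos t ht))
      convert hl using 1
      · rfl
      rw [Complex.div_re, Complex.normSq_apply]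
      norm_num only [Pi.add_apply, Pi.pow_apply]
      ring
    have hqt : ∀ t ∈ Icc (0:ℝ) 1, 0 < 1 - t^2*r^2 := by
      intro t ht
      have h1 : t^2 ≤ 1 := by nlinarith [ht.1, ht.2]
      have h2 : r^2 < 1 := by nlinarith [hr0, hr1]
      nlinarith [mul_le_mul_of_nonneg_right h1 (sq_nonneg r)]
    -- comparison derivatives
    have hUat : ∀ t ∈ Icc (0:ℝ) 1,
        HasDerivAt (fun t => -c * Real.log (1 - t^2*r^2)) (c * (2*t*r^2/(1-t^2*r^2))) t := by
      intro t ht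
      have hq : 0 < 1 - t^2*r^2 := hqt t ht
      have hin : HasDerivAt (fun s:ℝ => 1 - s^2*r^2) (-(2*t*r^2)) t := by
        have h2 := ((hasDerivAt_pow 2 t).mul_const (r^2)).const_sub 1
        simpa using h2
      have h3 := (hin.log (ne_of_gt hq)).const_mul (-c)
      convert h3 using 1
      · rfl
      · rfl
      ring
    have hLat : ∀ t ∈ Icc (0:ℝ) 1,
        HasDerivAt (fun t => -c * Real.log (1 + t^2*r^2)) (-(c * (2*t*r^2/(1+t^2*r^2)))) t := by
      intro t ht
      have hq : 0 < 1 + t^2*r^2 := by positivity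
      have hin : HasDerivAt (fun s:ℝ => 1 + s^2*r^2) (2*t*r^2) t := by
        have h2 := ((hasDerivAt_pow 2 t).mul_const (r^2)).const_add 1
        simpa using h2
      have h3 := (hin.log (ne_of_gt hq)).const_mul (-c)
      convert h3 using 1
      · rfl
      · rfl
      ring
    -- pointwise derivative bounds
    have hX : ∀ t ∈ Icc (0:ℝ) 1, 0 < t →
        (B ((t:ℂ)*z)).re = t * ((z * deriv g ((t:ℂ)*z)) / G t).re := by
      intro t ht ht0
      have hBeq : B ((t:ℂ)*z) = (t:ℂ) * ((z * deriv g ((t:ℂ)*z)) / G t) := by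
        rw [hBdef, hGdef]; ring
      rw [hBeq]
      simp [Complex.mul_re]
    have habs2 : ∀ t ∈ Icc (0:ℝ) 1, ‖(t:ℂ)*z‖ ^ 2 = t^2 * r^2 := by
      intro t ht
      rw [norm_mul, Complex.norm_real, Real.norm_eq_abs, _root_.abs_of_nonneg ht.1, ← hrdef]
      ring
    have hleU : ∀ t ∈ Icc (0:ℝ) 1,
        2 * ((z * deriv g ((t:ℂ)*z)) / G t).re ≤ c * (2*t*r^2/(1-t^2*r^2)) := by
      intro t ht
      have hq : 0 < 1 - t^2*r^2 := hqt t ht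
      rcases eq_or_lt_of_le ht.1 with heq|ht0
      · rw [← heq]
        simp [hg'0, hGdef]
      · have hB := (hReB _ (hmem t ht)).2
        rw [habs2 t ht, hX t ht ht0] at hB
        have key : 2 * ((z * deriv g ((t:ℂ)*z)) / G t).re * t
            ≤ c * (2*t*r^2/(1-t^2*r^2)) * t := by
          have h5 : c * (2*t*r^2/(1-t^2*r^2)) * t = 2 * (c * (t^2*r^2/(1-t^2*r^2))) := by
            ring
          rw [h5]; linarith [hB]
        exact le_of_mul_le_mul_right key ht0
    have hleL : ∀ t ∈ Icc (0:ℝ) 1,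
        -(c * (2*t*r^2/(1+t^2*r^2))) ≤ 2 * ((z * deriv g ((t:ℂ)*z)) / G t).re := by
      intro t ht
      have hq : 0 < 1 + t^2*r^2 := by positivity
      rcases eq_or_lt_of_le ht.1 with heq|ht0
      · rw [← heq]
        simp [hg'0, hGdef]
      · have hB := (hReB _ (hmem t ht)).1
        rw [habs2 t ht, hX t ht ht0] at hB
        have key : -(c * (2*t*r^2/(1+t^2*r^2))) * t
            ≤ 2 * ((z * deriv g ((t:ℂ)*z)) / G t).re * t := by
          have h5 : -(c * (2*t*r^2/(1+t^2*r^2))) * t = 2 * (-(c * (t^2*r^2/(1+t^2*r^2)))) := by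
            ring
          rw [h5]; linarith [hB]
        exact le_of_mul_le_mul_right key ht0
    -- apply monotone comparison
    have hcompU := mono_of_deriv_le hu' hUat hleU
    have hcompL := mono_of_deriv_le hLat hu'
      (fun t ht => hleL t ht)
    have hu0 : u 0 = 0 := by
      rw [hudef]; simp [hGdef, hg0]
    have hu1 : u 1 = Real.log ((g z).re^2 + (g z).im^2) := by
      rw [hudef]; simp [hGdef]
    have hgz : 0 < ‖g z‖ := norm_pos_iff.mpr (hf' z hz)
    have hlogeq : Real.log ((g z).re^2 + (g z).im^2) = 2 * Real.log (‖g z‖) := by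
      have h6 : (g z).re^2 + (g z).im^2 = ‖g z‖^2 := by
        rw [Complex.sq_norm, Complex.normSq_apply]; ring
      rw [h6, Real.log_pow]; push_cast; ring
    have hq1 : 0 < 1 - r^2 := by nlinarith
    have hq2 : 0 < 1 + r^2 := by positivity
    rw [hu1, hu0, hlogeq] at hcompU hcompL
    norm_num at hcompU hcompL
    -- hcompU : 2 * log (abs (g z)) ≤ -c * log (1 - r^2)  (plus -(-c*log 1)=0)
    constructor
    · have h4 : -((1-α) * Real.log (1+r^2)) ≤ Real.log (‖g z‖) := by
        rw [hcdef] at hcompL; linarith [hcompL]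
      calc 1 / (1 + r^2) ^ (1-α)
          = Real.exp (-((1-α) * Real.log (1+r^2))) := by
            rw [Real.rpow_def_of_pos hq2, one_div, ← Real.exp_neg]
            ring_nf
        _ ≤ Real.exp (Real.log (‖g z‖)) := Real.exp_le_exp.2 h4
        _ = ‖g z‖ := Real.exp_log hgz
    · have h4 : Real.log (‖g z‖) ≤ -((1-α) * Real.log (1-r^2)) := by
        rw [hcdef] at hcompU; linarith [hcompU]
      calc ‖g z‖
          = Real.exp (Real.log (‖g z‖)) := (Real.exp_log hgz).symm
        _ ≤ Real.exp (-((1-α) * Real.log (1-r^2))) := Real.exp_le_exp.2 h4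
        _ = 1 / (1 - r^2) ^ (1-α) := by
            rw [Real.rpow_def_of_pos hq1, one_div, ← Real.exp_neg]
            ring_nf
end

section
/- If f is a univalent convex mapping of order α (0 ≤ α < 1) on the unit disk with f''(0)=0, then for all z in the unit disk, |f(z)| ≥ ∫₀^{|z|} (1+t²)^{-(1-α)} dt. -/
open Complex Metric Set

lemma myHasDerivAt_norm {F : ℝ → ℂ} {F' : ℂ} {t : ℝ} (h : HasDerivAt F F' t) (h0 : F t ≠ 0) :
    HasDerivAt (fun s => ‖F s‖) (((starRingEnd ℂ) (F t) * F').re / ‖F t‖) t := by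
  have h2 : HasDerivAt (fun s => ‖F s‖ ^ 2) (2 * (inner ℝ (F t) F' : ℝ)) t := h.norm_sq
  have hs : HasDerivAt (fun s => Real.sqrt (‖F s‖ ^ 2)) (2 * (inner ℝ (F t) F' : ℝ) / (2 * Real.sqrt (‖F t‖^2))) t := by
    exact h2.sqrt (by simp [pow_eq_zero_iff, h0])
  have : (fun s => Real.sqrt (‖F s‖ ^ 2)) = fun s => ‖F s‖ := by
    funext s; rw [Real.sqrt_sq (norm_nonneg _)]
  rw [this] at hs
  convert hs using 1
  rw [Real.sqrt_sq (norm_nonneg _), Complex.inner]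
  field_simp

lemma re_div_helper (u c : ℂ) (t : ℝ) :
    ((((t:ℂ)) * (u / c)).re) * Complex.normSq c = t * (((starRingEnd ℂ) c * u).re) := by
  rcases eq_or_ne c 0 with rfl | hc
  · simp
  · have hn : Complex.normSq c ≠ 0 := (Complex.normSq_pos.mpr hc).ne'
    simp only [Complex.mul_re, Complex.ofReal_re, Complex.ofReal_im, Complex.div_re,
      Complex.div_im, Complex.mul_im, Complex.conj_re, Complex.conj_im]
    field_simp
    try ring
    try exact Or.inl trivial

lemma hasDerivAt_coe_mul (c : ℂ) (t : ℝ) : HasDerivAt (fun s : ℝ => (s:ℂ) * c) c t := by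
  have h := (Complex.ofRealCLM.hasDerivAt (x := t)).mul_const c
  simpa using h

lemma deriv_ne_zero_of_conv (f : ℂ → ℂ) (α : ℝ) (hα1 : α < 1)
    (hf : DifferentiableOn ℂ f (Metric.ball 0 1))
    (hf1 : deriv f 0 = 1)
    (hconv : ∀ z ∈ Metric.ball (0:ℂ) 1,
      α < (1 + z * (deriv (deriv f) z / deriv f z)).re) :
    ∀ z ∈ Metric.ball (0:ℂ) 1, deriv f z ≠ 0 := by
  have hfa : AnalyticOnNhd ℂ f (ball 0 1) := hf.analyticOnNhd isOpen_ball
  have hfa' : AnalyticOnNhd ℂ (deriv f) (ball 0 1) := hfa.deriv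
  intro z₀ hz₀ hzero
  have hz₀0 : z₀ ≠ 0 := by rintro rfl; rw [hf1] at hzero; exact one_ne_zero hzero
  have hz₀abs : ‖z₀‖ < 1 := by simpa [mem_ball_zero_iff] using hz₀
  -- membership of ray points
  have hmem : ∀ t : ℝ, t ∈ Icc (0:ℝ) 1 → ((t:ℂ) * z₀) ∈ ball (0:ℂ) 1 := by
    intro t ht
    rw [mem_ball_zero_iff]
    rw [norm_mul, Complex.norm_real]
    calc ‖t‖ * ‖z₀‖ ≤ 1 * ‖z₀‖ := by
          apply mul_le_mul_of_nonneg_right _ (norm_nonneg _)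
          rw [Real.norm_eq_abs, _root_.abs_of_nonneg ht.1]; exact ht.2
      _ < 1 := by rw [one_mul]; exact hz₀abs
  set F : ℝ → ℂ := fun t => deriv f ((t:ℂ) * z₀) with hF
  have hFcont : ContinuousOn F (Icc 0 1) := by
    apply ContinuousOn.comp (hfa'.continuousOn (s := ball 0 1)) _ hmem
    fun_prop
  -- the zero set
  set S : Set ℝ := {t : ℝ | t ∈ Icc (0:ℝ) 1 ∧ F t = 0} with hS
  have hSclosed : IsClosed S := by
    have heq : S = Icc (0:ℝ) 1 ∩ F ⁻¹' {0} := by ext t; simp [hS]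
    rw [heq]
    exact hFcont.preimage_isClosed_of_isClosed isClosed_Icc isClosed_singleton
  have h1S : (1:ℝ) ∈ S := ⟨⟨zero_le_one, le_rfl⟩, by simpa [hF] using hzero⟩
  have hSne : S.Nonempty := ⟨1, h1S⟩
  have hbdd : BddBelow S := ⟨0, fun t ht => ht.1.1⟩
  set T := sInf S with hT
  have hTS : T ∈ S := hSclosed.csInf_mem hSne hbdd
  have hT1 : T ≤ 1 := hTS.1.2
  have hT0 : 0 < T := by
    rcases hTS.1.1.lt_or_eq with h | h
    · exact h
    · exfalso
      have : F 0 = 0 := by rw [← h] at hTS; exact hTS.2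
      rw [hF] at this
      simp only [Complex.ofReal_zero, zero_mul] at this
      rw [hf1] at this
      exact one_ne_zero this
  have hFne : ∀ t, t ∈ Ico (0:ℝ) T → F t ≠ 0 := by
    intro t ht h0
    have : T ≤ t := csInf_le hbdd ⟨⟨ht.1, le_trans ht.2.le hT1⟩, h0⟩
    exact absurd ht.2 (not_lt.mpr this)
  -- monotone auxiliary function
  set ψ : ℝ → ℝ := fun t => ‖F t‖ * t ^ (1 - α : ℝ) with hψdef
  have hkey : ∀ t ∈ Ioo (T/2) T, HasDerivAt ψ
      ((((starRingEnd ℂ) (F t) * (z₀ * deriv (deriv f) ((t:ℂ) * z₀))).re / ‖F t‖) * t ^ (1-α:ℝ)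
        + ‖F t‖ * ((1-α) * t ^ ((1-α:ℝ)-1))) t ∧ 0 ≤ deriv ψ t := by
    intro t ht
    have ht0 : 0 < t := lt_trans (by linarith) ht.1
    have htmem : t ∈ Icc (0:ℝ) 1 := ⟨ht0.le, le_trans ht.2.le hT1⟩
    have hzmem : ((t:ℂ) * z₀) ∈ ball (0:ℂ) 1 := hmem t htmem
    have hFt : F t ≠ 0 := hFne t ⟨ht0.le, ht.2⟩
    have hd2 : DifferentiableAt ℂ (deriv f) ((t:ℂ) * z₀) := (hfa' _ hzmem).differentiableAt
    have hFd : HasDerivAt F (z₀ * deriv (deriv f) ((t:ℂ) * z₀)) t := by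
      have h1 : HasDerivAt (deriv f) (deriv (deriv f) ((t:ℂ) * z₀)) ((t:ℂ) * z₀) :=
        hd2.hasDerivAt
      have h2 := HasDerivAt.scomp (𝕜 := ℝ) (𝕜' := ℂ) t h1 (hasDerivAt_coe_mul z₀ t)
      rw [smul_eq_mul] at h2; exact h2
    have hA := myHasDerivAt_norm hFd hFt
    have hB : HasDerivAt (fun s : ℝ => s ^ (1-α:ℝ)) ((1-α) * t ^ ((1-α:ℝ)-1)) t :=
      Real.hasDerivAt_rpow_const (Or.inl ht0.ne')
    have hψ : HasDerivAt ψ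
        ((((starRingEnd ℂ) (F t) * (z₀ * deriv (deriv f) ((t:ℂ) * z₀))).re / ‖F t‖) * t ^ (1-α:ℝ)
          + ‖F t‖ * ((1-α) * t ^ ((1-α:ℝ)-1))) t := hA.mul hB
    refine ⟨hψ, ?_⟩
    rw [hψ.deriv]
    -- lower bound the first term
    set c := F t with hc
    set d := deriv (deriv f) ((t:ℂ) * z₀) with hd
    set R := (((t:ℂ) * z₀) * (d / c)).re with hR
    have hRgt : α - 1 < R := by
      have h := hconv _ hzmem
      rw [Complex.add_re, Complex.one_re] at h
      have : F t = deriv f ((t:ℂ)*z₀) := rfl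
      rw [hR, hc, this]
      linarith
    have hre : ((starRingEnd ℂ) c * (z₀ * d)).re = R * Complex.normSq c / t := by
      have h := re_div_helper (z₀ * d) c t
      have hz : ((t:ℂ)) * ((z₀ * d) / c) = ((t:ℂ) * z₀) * (d / c) := by ring
      rw [hz] at h
      rw [← hR] at h
      rw [eq_div_iff ht0.ne']
      linarith [h]
    have hnormsq : Complex.normSq c = ‖c‖ ^ 2 := by
      rw [Complex.normSq_eq_norm_sq]
    have hcpos : 0 < ‖c‖ := norm_pos_iff.mpr hFt
    have hts : t ^ ((1-α:ℝ)-1) = t ^ (1-α:ℝ) / t := Real.rpow_sub_one ht0.ne' _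
    have htp : 0 < t ^ (1-α:ℝ) := Real.rpow_pos_of_pos ht0 _
    have key : ((starRingEnd ℂ) c * (z₀ * d)).re / ‖c‖ * t ^ (1-α:ℝ)
        + ‖c‖ * ((1-α) * t ^ ((1-α:ℝ)-1))
        = (R + 1 - α) * ‖c‖ * t ^ (1-α:ℝ) / t := by
      rw [hre, hts, hnormsq]
      field_simp [ht0.ne', (norm_pos_iff.mpr hFt).ne']
      ring
    rw [key]
    apply div_nonneg _ ht0.le
    exact mul_nonneg (mul_nonneg (by linarith) hcpos.le) htp.le
  have hmono : MonotoneOn ψ (Icc (T/2) T) := by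
    apply monotoneOn_of_deriv_nonneg (convex_Icc _ _)
    · apply ContinuousOn.mul
      · apply ContinuousOn.norm
        apply hFcont.mono
        intro t ht
        exact ⟨le_trans (by linarith) ht.1, le_trans ht.2 hT1⟩
      · intro t ht
        apply ContinuousAt.continuousWithinAt
        exact (Real.continuousAt_rpow_const t _ (Or.inl (by intro h; rw [h] at ht; exact absurd ht.1 (by simp; linarith)))).comp continuousAt_id
    · rw [interior_Icc]
      intro t ht
      exact ((hkey t ht).1).differentiableAt.differentiableWithinAt
    · rw [interior_Icc]
      intro t ht
      exact (hkey t ht).2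
  have hhalf : T/2 ∈ Icc (T/2) T := ⟨le_rfl, by linarith⟩
  have hTmem : T ∈ Icc (T/2) T := ⟨by linarith, le_rfl⟩
  have hle := hmono hhalf hTmem (by linarith)
  have hψT : ψ T = 0 := by rw [hψdef]; simp [hTS.2]
  have hψhalf : 0 < ψ (T/2) := by
    apply mul_pos
    · exact norm_pos_iff.mpr (hFne (T/2) ⟨by linarith, by linarith⟩)
    · exact Real.rpow_pos_of_pos (by linarith) _
  rw [hψT] at hle
  linarith

lemma schwarz_re (p : ℂ → ℂ) (α : ℝ) (hα1 : α < 1)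
    (hp : DifferentiableOn ℂ p (ball 0 1)) (hp0 : p 0 = 1) (hp1 : deriv p 0 = 0)
    (hre : ∀ z ∈ ball (0:ℂ) 1, α < (p z).re) :
    ∀ z ∈ ball (0:ℂ) 1,
      -(2 * (1 - α) * ‖z‖ ^ 2 / (1 + ‖z‖ ^ 2)) ≤ (p z - 1).re := by
  set D := ball (0:ℂ) 1 with hD
  have hdenom : ∀ z ∈ D, p z + (1 - 2*α : ℝ) ≠ 0 := by
    intro z hz h
    have h1 : (p z).re = 2*α - 1 := by
      have := congrArg Complex.re h
      simp [Complex.add_re, Complex.ofReal_re] at this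
      linarith
    have := hre z hz
    rw [h1] at this; linarith
  set w : ℂ → ℂ := fun z => (p z - 1) / (p z + (1 - 2*α : ℝ)) with hw
  have hwd : DifferentiableOn ℂ w D :=
    (hp.sub (differentiableOn_const _)).div (hp.add (differentiableOn_const _)) hdenom
  have hw0 : w 0 = 0 := by simp [hw, hp0]
  have hmaps : MapsTo w D (ball 0 1) := by
    intro z hz
    rw [mem_ball_zero_iff]
    have hd := hdenom z hz
    have hlt : ‖p z - 1‖ ^ 2 < ‖p z + (1 - 2*α : ℝ)‖ ^ 2 := by
      rw [Complex.sq_norm, Complex.sq_norm, Complex.normSq_apply, Complex.normSq_apply]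
      have := hre z hz
      simp only [Complex.sub_re, Complex.sub_im, Complex.add_re, Complex.add_im,
        Complex.one_re, Complex.one_im, Complex.ofReal_re, Complex.ofReal_im]
      nlinarith
    have habs : ‖p z - 1‖ < ‖p z + (1 - 2*α : ℝ)‖ := by
      nlinarith [norm_nonneg (p z - 1), norm_nonneg (p z + (1 - 2*α : ℝ))]
    calc ‖w z‖ = ‖p z - 1‖ / ‖p z + (1 - 2*α : ℝ)‖ := by
          simp [hw, norm_div]
      _ < 1 := (div_lt_one (lt_of_le_of_lt (norm_nonneg _) habs)).mpr habs
  -- derivative of w at 0 is 0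
  have hpd : DifferentiableAt ℂ p 0 := hp.differentiableAt (isOpen_ball.mem_nhds (by simp [hD]))
  have hwderiv : deriv w 0 = 0 := by
    rw [hw]
    rw [deriv_fun_div (by fun_prop) (by fun_prop) (by simpa [hp0] using hdenom 0 (by simp [hD]))]
    simp [hp0, hp1, deriv_sub_const]
  -- first dslope
  set w1 : ℂ → ℂ := dslope w 0 with hw1
  have hball : D ∈ nhds (0:ℂ) := isOpen_ball.mem_nhds (by simp [hD])
  have hw1d : DifferentiableOn ℂ w1 D := (differentiableOn_dslope hball).mpr hwd
  have hw1le : ∀ z ∈ D, ‖w1 z‖ ≤ 1 := by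
    intro z hz
    have := Complex.norm_dslope_le_div_of_mapsTo_ball hwd (by rw [hw0]; exact hmaps.mono_right ball_subset_closedBall) hz
    simpa using this
  have hw10 : w1 0 = 0 := by rw [hw1, dslope_same, hwderiv]
  have hm1 : MapsTo w1 D (ball 0 1) := by
    intro z₀ hz₀
    rw [mem_ball_zero_iff]
    rcases lt_or_ge (‖w1 z₀‖) 1 with h | h
    · exact h
    · exfalso
      have heq : ‖w1 z₀‖ = 1 := le_antisymm (hw1le z₀ hz₀) h
      have hmax : IsMaxOn (norm ∘ w1) D z₀ := by
        intro z hz; simp only [Function.comp, mem_setOf_eq, heq]; exact hw1le z hz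
      have := Complex.eqOn_of_isPreconnected_of_isMaxOn_norm
        (convex_ball (0:ℂ) 1).isPreconnected isOpen_ball hw1d hz₀ hmax
      have h0 : w1 0 = w1 z₀ := this (by simp [hD])
      rw [hw10] at h0
      rw [← h0] at heq
      simp at heq
  set w2 : ℂ → ℂ := dslope w1 0 with hw2
  have hw2le : ∀ z ∈ D, ‖w2 z‖ ≤ 1 := by
    intro z hz
    have := Complex.norm_dslope_le_div_of_mapsTo_ball hw1d (by rw [hw10]; exact hm1.mono_right ball_subset_closedBall) hz
    simpa using this
  -- |w z| <= |z|^2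
  have hwsq : ∀ z ∈ D, ‖w z‖ ≤ ‖z‖ ^ 2 := by
    intro z hz
    rcases eq_or_ne z 0 with rfl | hz0
    · simp [hw0]
    · have e1 : w1 z = z⁻¹ * (w z) := by
        rw [hw1, dslope_of_ne _ hz0, slope_def_field]; field_simp [hw0]; simp [hw0]
      have e2 : w2 z = z⁻¹ * (w1 z) := by
        rw [hw2, dslope_of_ne _ hz0, slope_def_field]; field_simp [hw10]; simp [hw10]
      have hwz : w z = z^2 * w2 z := by
        rw [e2, e1]; field_simp
      rw [hwz, norm_mul, norm_pow]
      calc ‖z‖ ^ 2 * ‖w2 z‖ ≤ ‖z‖ ^ 2 * 1 := by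
            have h := hw2le z hz
            gcongr
        _ = ‖z‖ ^ 2 := by ring
  -- recover p - 1 and take real parts
  intro z hz
  have hd := hdenom z hz
  have hzlt : ‖z‖ < 1 := by simpa [hD, mem_ball_zero_iff] using hz
  have hz2 : ‖z‖ ^ 2 < 1 := by nlinarith [norm_nonneg z]
  have hpz : p z - 1 = w z * (p z + ((1 - 2*α : ℝ) : ℂ)) := by
    rw [hw]; exact (div_mul_cancel₀ _ hd).symm
  have hK : (1 - w z) * (p z + ((1 - 2*α : ℝ) : ℂ)) = ((2 - 2*α : ℝ) : ℂ) := by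
    rw [sub_mul, one_mul, ← hpz]
    push_cast
    ring
  have hne2 : ((2 - 2*α : ℝ) : ℂ) ≠ 0 := by
    simp only [ne_eq, Complex.ofReal_eq_zero]
    intro h; linarith
  have h1wne : (1:ℂ) - w z ≠ 0 := by
    intro h
    rw [h, zero_mul] at hK
    exact hne2 hK.symm
  have hdval : p z + ((1 - 2*α : ℝ) : ℂ) = ((2 - 2*α : ℝ) : ℂ) / (1 - w z) := by
    rw [eq_div_iff h1wne]
    linear_combination hK
  have hpz1 : p z - 1 = ((2 - 2*α : ℝ) : ℂ) * (w z / (1 - w z)) := by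
    rw [hpz, hdval]; ring
  set s := w z with hs
  set x := s.re with hx
  set y := s.im with hy
  set ρ := ‖z‖ ^ 2 with hρ
  have hm : x^2 + y^2 ≤ ρ^2 := by
    have h1 : ‖s‖ ≤ ρ := hwsq z hz
    have h2 : Complex.normSq s = x^2 + y^2 := by
      rw [Complex.normSq_apply]; ring
    have h3 : Complex.normSq s = ‖s‖ ^ 2 := (Complex.sq_norm s).symm
    nlinarith [norm_nonneg s, norm_nonneg z]
  have hρ0 : 0 ≤ ρ := by positivity
  have hρ1 : ρ < 1 := hz2
  have hxρ : -ρ ≤ x := by nlinarith [sq_nonneg (x + ρ), sq_nonneg y]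
  have hNpos : 0 < Complex.normSq (1 - s) := Complex.normSq_pos.mpr h1wne
  have hNval : Complex.normSq (1 - s) = (1-x)^2 + y^2 := by
    rw [Complex.normSq_apply]
    simp [Complex.sub_re, Complex.sub_im, ← hx, ← hy]
    ring
  have hre1 : (p z - 1).re = (2 - 2*α) * ((x - (x^2+y^2)) / ((1-x)^2 + y^2)) := by
    rw [hpz1, Complex.re_ofReal_mul]
    congr 1
    rw [Complex.div_re, hNval]
    simp only [Complex.sub_re, Complex.sub_im, Complex.one_re, Complex.one_im, ← hx, ← hy]
    field_simp
    ring
  rw [hre1]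
  have hNpos' : 0 < (1-x)^2 + y^2 := by rw [← hNval]; exact hNpos
  have h1ρ : 0 < 1 + ρ := by linarith
  rw [neg_le]
  have hgoal : -((2 - 2*α) * ((x - (x^2+y^2)) / ((1-x)^2 + y^2)))
      = ((2 - 2*α) * (-(x - (x^2+y^2)))) / ((1-x)^2 + y^2) := by ring
  rw [hgoal, div_le_div_iff₀ hNpos' h1ρ]
  have hcore : 0 ≤ (x - (x^2+y^2)) * (1 + ρ) + ρ * ((1-x)^2 + y^2) := by
    have hid : (x - (x^2+y^2)) * (1 + ρ) + ρ * ((1-x)^2 + y^2)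
        = (1 - ρ) * (x + ρ) + (ρ^2 - (x^2+y^2)) := by ring
    rw [hid]
    have h1 : 0 ≤ (1 - ρ) * (x + ρ) := mul_nonneg (by linarith) (by linarith)
    linarith
  nlinarith [mul_nonneg (by linarith : (0:ℝ) ≤ 2 - 2*α) hcore]

lemma deriv_lower (f : ℂ → ℂ) (α : ℝ) (hα1 : α < 1)
    (hf : DifferentiableOn ℂ f (Metric.ball 0 1))
    (hf1 : deriv f 0 = 1)
    (hne : ∀ z ∈ Metric.ball (0:ℂ) 1, deriv f z ≠ 0)
    (hreb : ∀ z ∈ Metric.ball (0:ℂ) 1,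
      -(2 * (1 - α) * ‖z‖ ^ 2 / (1 + ‖z‖ ^ 2))
        ≤ (z * (deriv (deriv f) z / deriv f z)).re) :
    ∀ ζ ∈ Metric.ball (0:ℂ) 1, (1 + ‖ζ‖ ^ 2) ^ (α - 1 : ℝ) ≤ ‖deriv f ζ‖ := by
  have hfa : AnalyticOnNhd ℂ f (ball 0 1) := hf.analyticOnNhd isOpen_ball
  have hfa' : AnalyticOnNhd ℂ (deriv f) (ball 0 1) := hfa.deriv
  intro ζ hζ
  have hζabs : ‖ζ‖ < 1 := by simpa [mem_ball_zero_iff] using hζ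
  set ρ : ℝ := ‖ζ‖ ^ 2 with hρdef
  have hρ0 : 0 ≤ ρ := by positivity
  have hρ1 : ρ < 1 := by nlinarith [norm_nonneg ζ]
  have hmem : ∀ t : ℝ, t ∈ Icc (0:ℝ) 1 → ((t:ℂ) * ζ) ∈ ball (0:ℂ) 1 := by
    intro t ht
    rw [mem_ball_zero_iff, norm_mul, Complex.norm_real]
    calc ‖t‖ * ‖ζ‖ ≤ 1 * ‖ζ‖ := by
          apply mul_le_mul_of_nonneg_right _ (norm_nonneg _)
          rw [Real.norm_eq_abs, _root_.abs_of_nonneg ht.1]; exact ht.2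
      _ < 1 := by rw [one_mul]; exact hζabs
  set F : ℝ → ℂ := fun t => deriv f ((t:ℂ) * ζ) with hF
  have hFcont : ContinuousOn F (Icc 0 1) := by
    apply ContinuousOn.comp (hfa'.continuousOn (s := ball 0 1)) _ hmem
    fun_prop
  set u : ℝ → ℝ := fun t => 1 + ρ * t^2 with hu
  have hupos : ∀ t : ℝ, 0 < u t := by
    intro t; have : 0 ≤ ρ * t^2 := by positivity
    simp only [hu]; linarith
  set ψ : ℝ → ℝ := fun t => ‖F t‖ * (u t) ^ (1 - α : ℝ) with hψdef
  have hud : ∀ t : ℝ, HasDerivAt u (2 * ρ * t) t := by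
    intro t
    have h1 : HasDerivAt (fun t : ℝ => t^2) (2*t) t := by
      simpa using (hasDerivAt_pow 2 t)
    have h2 : ρ * (2*t) = 2*ρ*t := by ring
    rw [← h2]
    exact (h1.const_mul ρ).const_add 1
  have hkey : ∀ t ∈ Ioo (0:ℝ) 1, HasDerivAt ψ
      ((((starRingEnd ℂ) (F t) * (ζ * deriv (deriv f) ((t:ℂ) * ζ))).re / ‖F t‖) * (u t) ^ (1-α:ℝ)
        + ‖F t‖ * (2*ρ*t * (1-α) * (u t) ^ ((1-α:ℝ)-1))) t ∧ 0 ≤ deriv ψ t := by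
    intro t ht
    have ht0 : 0 < t := ht.1
    have htmem : t ∈ Icc (0:ℝ) 1 := ⟨ht0.le, ht.2.le⟩
    have hzmem : ((t:ℂ) * ζ) ∈ ball (0:ℂ) 1 := hmem t htmem
    have hFt : F t ≠ 0 := hne _ hzmem
    have hd2 : DifferentiableAt ℂ (deriv f) ((t:ℂ) * ζ) := (hfa' _ hzmem).differentiableAt
    have hFd : HasDerivAt F (ζ * deriv (deriv f) ((t:ℂ) * ζ)) t := by
      have h1 : HasDerivAt (deriv f) (deriv (deriv f) ((t:ℂ) * ζ)) ((t:ℂ) * ζ) := hd2.hasDerivAt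
      have h2 := HasDerivAt.scomp (𝕜 := ℝ) (𝕜' := ℂ) t h1 (hasDerivAt_coe_mul ζ t)
      rw [smul_eq_mul] at h2; exact h2
    have hA := myHasDerivAt_norm hFd hFt
    have hB : HasDerivAt (fun s : ℝ => (u s) ^ (1-α:ℝ))
        (2*ρ*t * (1-α) * (u t) ^ ((1-α:ℝ)-1)) t := by
      have h3 := (hud t).rpow_const (p := (1-α:ℝ)) (Or.inl (hupos t).ne')
      have h4 : 2*ρ*t * (1-α) * (u t) ^ ((1-α:ℝ)-1) = 2*ρ*t * ((1-α) * (u t) ^ ((1-α:ℝ)-1)) := by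
        ring
      rw [h4]
      convert h3 using 1
      ring
    have hψ' : HasDerivAt ψ
        ((((starRingEnd ℂ) (F t) * (ζ * deriv (deriv f) ((t:ℂ) * ζ))).re / ‖F t‖) * (u t) ^ (1-α:ℝ)
          + ‖F t‖ * (2*ρ*t * (1-α) * (u t) ^ ((1-α:ℝ)-1))) t := hA.mul hB
    refine ⟨hψ', ?_⟩
    rw [hψ'.deriv]
    set c := F t with hc
    set d := deriv (deriv f) ((t:ℂ) * ζ) with hd
    have hcpos : 0 < ‖c‖ := norm_pos_iff.mpr hFt
    -- |tζ|^2 = ρ t^2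
    have habs2 : ‖(t:ℂ) * ζ‖ ^ 2 = ρ * t^2 := by
      rw [norm_mul, Complex.norm_real, Real.norm_eq_abs, _root_.abs_of_nonneg ht0.le]
      rw [hρdef]; ring
    -- lower bound on the re-term
    have hR := hreb _ hzmem
    rw [habs2] at hR
    set R := (((t:ℂ) * ζ) * (d / c)).re with hRdef
    have hre : ((starRingEnd ℂ) c * (ζ * d)).re = R * Complex.normSq c / t := by
      have h := re_div_helper (ζ * d) c t
      have hz : ((t:ℂ)) * ((ζ * d) / c) = ((t:ℂ) * ζ) * (d / c) := by ring
      rw [hz] at h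
      rw [← hRdef] at h
      rw [eq_div_iff ht0.ne']
      linarith [h]
    have hRlb : -(2 * (1-α) * (ρ * t^2) / (u t)) ≤ R := by
      simpa [hu] using hR
    have hnormsq : Complex.normSq c = ‖c‖ ^ 2 := by
      rw [Complex.normSq_eq_norm_sq]
    have hus : (u t) ^ ((1-α:ℝ)-1) = (u t) ^ (1-α:ℝ) / (u t) :=
      Real.rpow_sub_one (hupos t).ne' _
    have hup : 0 < (u t) ^ (1-α:ℝ) := Real.rpow_pos_of_pos (hupos t) _
    -- the first term is ≥ the negative of the second
    have hfirst : ((starRingEnd ℂ) c * (ζ * d)).re / ‖c‖ * (u t) ^ (1-α:ℝ)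
        = R * ‖c‖ / t * (u t) ^ (1-α:ℝ) := by
      rw [hre, hnormsq]
      field_simp [(norm_pos_iff.mpr hFt).ne', ht0.ne']
    rw [hfirst, hus]
    have hmul : -(2 * (1-α) * (ρ * t^2) / (u t)) * (‖c‖ / t * (u t) ^ (1-α:ℝ))
        ≤ R * (‖c‖ / t * (u t) ^ (1-α:ℝ)) := by
      apply mul_le_mul_of_nonneg_right hRlb
      positivity
    have hzero : -(2 * (1-α) * (ρ * t^2) / (u t)) * (‖c‖ / t * (u t) ^ (1-α:ℝ))
        + ‖c‖ * (2*ρ*t * (1-α) * ((u t) ^ (1-α:ℝ) / (u t))) = 0 := by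
      field_simp
      ring
    have heq : R * ‖c‖ / t * (u t) ^ (1-α:ℝ) = R * (‖c‖ / t * (u t) ^ (1-α:ℝ)) := by ring
    rw [heq]
    linarith
  have hmono : MonotoneOn ψ (Icc (0:ℝ) 1) := by
    apply monotoneOn_of_deriv_nonneg (convex_Icc _ _)
    · apply ContinuousOn.mul (hFcont.norm)
      apply ContinuousOn.rpow_const
      · fun_prop
      · intro t _; exact Or.inl (hupos t).ne'
    · rw [interior_Icc]
      intro t ht
      exact ((hkey t ht).1).differentiableAt.differentiableWithinAt
    · rw [interior_Icc]
      intro t ht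
      exact (hkey t ht).2
  have h01 : (0:ℝ) ∈ Icc (0:ℝ) 1 := ⟨le_rfl, zero_le_one⟩
  have h11 : (1:ℝ) ∈ Icc (0:ℝ) 1 := ⟨zero_le_one, le_rfl⟩
  have hle := hmono h01 h11 zero_le_one
  have hψ0 : ψ 0 = 1 := by
    rw [hψdef]
    simp [hF, hu, hf1, Real.one_rpow]
  have hψ1 : ψ 1 = ‖deriv f ζ‖ * (1 + ρ) ^ (1-α:ℝ) := by
    rw [hψdef]
    simp [hF, hu]
  rw [hψ0, hψ1] at hle
  have hppos : (0:ℝ) < (1 + ρ) ^ (1-α:ℝ) := Real.rpow_pos_of_pos (by linarith) _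
  have hinv : (1 + ρ) ^ (α - 1 : ℝ) = ((1 + ρ) ^ (1-α:ℝ))⁻¹ := by
    rw [← Real.rpow_neg (by linarith : (0:ℝ) ≤ 1 + ρ)]
    norm_num
  rw [hρdef] at hinv ⊢
  rw [hinv, inv_le_iff_one_le_mul₀ hppos]
  linarith [hle]


theorem convex_order_alpha_zero_second_deriv_growth_lower
    (f : ℂ → ℂ) (α : ℝ) (hα0 : 0 ≤ α) (hα1 : α < 1)
    (hf : DifferentiableOn ℂ f (Metric.ball 0 1))
    (hinj : Set.InjOn f (Metric.ball 0 1))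
    (hcvx : Convex ℝ (f '' Metric.ball 0 1))
    (hf0 : f 0 = 0) (hf1 : deriv f 0 = 1) (hf2 : deriv (deriv f) 0 = 0)
    (hconv : ∀ z ∈ Metric.ball (0:ℂ) 1,
      α < (1 + z * (deriv (deriv f) z / deriv f z)).re) :
    ∀ z ∈ Metric.ball (0:ℂ) 1,
      (∫ t in (0:ℝ)..‖z‖, (1 + t ^ 2) ^ (-(1 - α))) ≤ ‖f z‖ := by
  intro z hz
  rcases eq_or_ne z 0 with rfl | hz0
  · simp [hf0]
  have h0mem : (0:ℂ) ∈ Metric.ball (0:ℂ) 1 := by simp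
  have hne := deriv_ne_zero_of_conv f α hα1 hf hf1 hconv
  have hfa : AnalyticOnNhd ℂ f (ball 0 1) := hf.analyticOnNhd isOpen_ball
  have hfa' : AnalyticOnNhd ℂ (deriv f) (ball 0 1) := hfa.deriv
  have hfa'' : AnalyticOnNhd ℂ (deriv (deriv f)) (ball 0 1) := hfa'.deriv
  -- the function p and the Schwarz-type bound
  set p : ℂ → ℂ := fun ζ => 1 + ζ * (deriv (deriv f) ζ / deriv f ζ) with hp
  have hpdiff : DifferentiableOn ℂ p (ball 0 1) := by
    apply DifferentiableOn.const_add
    exact differentiableOn_id.mul ((hfa''.differentiableOn).div (hfa'.differentiableOn) hne)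
  have hp0 : p 0 = 1 := by simp [hp]
  have hg0 : DifferentiableAt ℂ (fun ζ => deriv (deriv f) ζ / deriv f ζ) 0 :=
    ((hfa'' 0 h0mem).differentiableAt).div ((hfa' 0 h0mem).differentiableAt) (hne 0 h0mem)
  have hp1 : deriv p 0 = 0 := by
    rw [hp]
    rw [deriv_const_add]
    rw [deriv_fun_mul differentiableAt_fun_id hg0]
    simp [hf2, hf1]
  have hreb : ∀ ζ ∈ ball (0:ℂ) 1,
      -(2 * (1 - α) * ‖ζ‖ ^ 2 / (1 + ‖ζ‖ ^ 2))
        ≤ (ζ * (deriv (deriv f) ζ / deriv f ζ)).re := by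
    intro ζ hζ
    have h := schwarz_re p α hα1 hpdiff hp0 hp1 hconv ζ hζ
    have hps : p ζ - 1 = ζ * (deriv (deriv f) ζ / deriv f ζ) := by rw [hp]; ring
    rwa [hps] at h
  have hlow := deriv_lower f α hα1 hf hf1 hne hreb
  -- the integral function
  set m : ℝ → ℝ := fun t => (1 + t^2 : ℝ) ^ (-(1-α) : ℝ) with hm
  have hmpos : ∀ t : ℝ, (0:ℝ) < 1 + t^2 := fun t => by positivity
  have hmcont : Continuous m := by
    apply Continuous.rpow_const (by fun_prop)
    intro t; exact Or.inl (hmpos t).ne'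
  set M : ℝ → ℝ := fun r => ∫ t in (0:ℝ)..r, m t with hM
  have hMd : ∀ r : ℝ, HasDerivAt M (m r) r := fun r =>
    intervalIntegral.integral_hasDerivAt_right (hmcont.intervalIntegrable _ _)
      (hmcont.stronglyMeasurable.stronglyMeasurableAtFilter) hmcont.continuousAt
  have hM0 : M 0 = 0 := intervalIntegral.integral_same
  -- the inverse function and the path
  set w : ℂ := f z with hw
  have hwne : w ≠ 0 := by
    rw [hw, ← hf0]
    exact fun h => hz0 (hinj hz h0mem h)
  set g : ℂ → ℂ := Function.invFunOn f (ball 0 1) with hg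
  have hgf : ∀ x ∈ ball (0:ℂ) 1, g (f x) = x := fun x hx => hinj.leftInvOn_invFunOn hx
  have hseg : ∀ s : ℝ, s ∈ Icc (0:ℝ) 1 → ∃ x ∈ ball (0:ℂ) 1, f x = (s:ℂ) * w := by
    intro s hs
    have h1 : (0:ℂ) ∈ f '' ball 0 1 := ⟨0, h0mem, hf0⟩
    have h2 : w ∈ f '' ball 0 1 := ⟨z, hz, rfl⟩
    have h3 := hcvx h1 h2 (by linarith [hs.2] : (0:ℝ) ≤ 1 - s) hs.1 (by ring)
    have h4 : (1 - s) • (0:ℂ) + s • w = (s:ℂ) * w := by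
      simp [Complex.real_smul]
    rw [h4] at h3
    obtain ⟨x, hx, hfx⟩ := h3
    exact ⟨x, hx, hfx⟩
  set γ : ℝ → ℂ := fun s => g ((s:ℂ) * w) with hγ
  have hγmem : ∀ s ∈ Icc (0:ℝ) 1, γ s ∈ ball (0:ℂ) 1 := fun s hs => Function.invFunOn_mem (hseg s hs)
  have hfγ : ∀ s ∈ Icc (0:ℝ) 1, f (γ s) = (s:ℂ) * w := fun s hs => Function.invFunOn_eq (hseg s hs)
  have hγd : ∀ s ∈ Icc (0:ℝ) 1, HasDerivAt γ (w * (deriv f (γ s))⁻¹) s := by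
    intro s hs
    have hxmem : γ s ∈ ball (0:ℂ) 1 := hγmem s hs
    have hfx : f (γ s) = (s:ℂ) * w := hfγ s hs
    have hstrict : HasStrictDerivAt f (deriv f (γ s)) (γ s) :=
      (hfa _ hxmem).hasStrictFDerivAt.hasStrictDerivAt
    have hginv : HasStrictDerivAt g (deriv f (γ s))⁻¹ (f (γ s)) := by
      apply hstrict.to_local_left_inverse (hne _ hxmem)
      filter_upwards [isOpen_ball.mem_nhds hxmem] with y hy
      exact hgf y hy
    rw [hfx] at hginv
    have hcomp := HasDerivAt.scomp (𝕜 := ℝ) (𝕜' := ℂ) s hginv.hasDerivAt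
      (hasDerivAt_coe_mul w s)
    rw [smul_eq_mul] at hcomp; exact hcomp
  have hγ1 : γ 1 = z := by
    rw [hγ]
    simp only [Complex.ofReal_one, one_mul, hw]
    exact hgf z hz
  have hγ0 : γ 0 = 0 := by
    have h := hgf 0 h0mem
    rw [hf0] at h
    rw [hγ]
    simpa using h
  have hγne : ∀ s : ℝ, s ∈ Ioc (0:ℝ) 1 → γ s ≠ 0 := by
    intro s hs h0
    have h := hfγ s ⟨hs.1.le, hs.2⟩
    rw [h0, hf0] at h
    rcases mul_eq_zero.mp h.symm with h' | h'
    · exact hs.1.ne' (by exact_mod_cast h')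
    · exact hwne h'
  -- the composed function φ and its derivative bound
  set φ : ℝ → ℝ := fun s => M ‖γ s‖ with hφ
  set φ' : ℝ → ℝ := fun s =>
    m ‖γ s‖ * (((starRingEnd ℂ) (γ s) * (w * (deriv f (γ s))⁻¹)).re / ‖γ s‖) with hφ'
  have hφd : ∀ s ∈ Ioc (0:ℝ) 1, HasDerivAt φ (φ' s) s := by
    intro s hs
    have hρ := myHasDerivAt_norm (hγd s ⟨hs.1.le, hs.2⟩) (hγne s hs)
    have := (hMd ‖γ s‖).comp s hρ
    exact this
  have hφbound : ∀ s ∈ Ioc (0:ℝ) 1, |φ' s| ≤ ‖w‖ := by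
    intro s hs
    have hsmem : s ∈ Icc (0:ℝ) 1 := ⟨hs.1.le, hs.2⟩
    have hγs : γ s ∈ ball (0:ℂ) 1 := hγmem s hsmem
    have hγ0s : γ s ≠ 0 := hγne s hs
    have hγpos : 0 < ‖γ s‖ := norm_pos_iff.mpr hγ0s
    have hc : deriv f (γ s) ≠ 0 := hne _ hγs
    have hcpos : 0 < ‖deriv f (γ s)‖ := norm_pos_iff.mpr hc
    have hml : m ‖γ s‖ ≤ ‖deriv f (γ s)‖ := by
      have h := hlow _ hγs
      have he : (α - 1 : ℝ) = -(1-α) := by ring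
      rw [he] at h
      rw [hm]
      simpa using h
    have hmnn : 0 ≤ m ‖γ s‖ := by
      rw [hm]; positivity
    have hrebd : |((starRingEnd ℂ) (γ s) * (w * (deriv f (γ s))⁻¹)).re / ‖γ s‖|
        ≤ ‖w‖ * ‖deriv f (γ s)‖⁻¹ := by
      rw [abs_div, _root_.abs_of_nonneg hγpos.le, div_le_iff₀ hγpos]
      calc |((starRingEnd ℂ) (γ s) * (w * (deriv f (γ s))⁻¹)).re|
          ≤ ‖(starRingEnd ℂ) (γ s) * (w * (deriv f (γ s))⁻¹)‖ :=
            Complex.abs_re_le_norm _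
        _ = ‖γ s‖ * (‖w‖ * ‖deriv f (γ s)‖⁻¹) := by
            rw [norm_mul, norm_mul, norm_inv, Complex.norm_conj]
        _ = ‖w‖ * ‖deriv f (γ s)‖⁻¹ * ‖γ s‖ := by ring
    rw [hφ']
    rw [abs_mul, _root_.abs_of_nonneg hmnn]
    calc m ‖γ s‖ * |((starRingEnd ℂ) (γ s) * (w * (deriv f (γ s))⁻¹)).re / ‖γ s‖|
        ≤ ‖deriv f (γ s)‖ * (‖w‖ * ‖deriv f (γ s)‖⁻¹) := by
          apply mul_le_mul hml hrebd (abs_nonneg _) hcpos.le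
      _ = ‖w‖ := by
          rw [← mul_assoc, mul_comm ‖deriv f (γ s)‖ ‖w‖, mul_assoc,
            mul_inv_cancel₀ hcpos.ne', mul_one]
  -- MVT on [ε, 1]
  have hεest : ∀ ε ∈ Ioo (0:ℝ) 1, M ‖z‖ ≤ ‖w‖ + M ‖γ ε‖ := by
    intro ε hε
    have hIcc : ∀ x ∈ Icc ε 1, HasDerivWithinAt φ (φ' x) (Icc ε 1) x := by
      intro x hx
      exact (hφd x ⟨lt_of_lt_of_le hε.1 hx.1, hx.2⟩).hasDerivWithinAt
    have hbd : ∀ x ∈ Ico ε 1, ‖φ' x‖ ≤ ‖w‖ := by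
      intro x hx
      exact hφbound x ⟨lt_of_lt_of_le hε.1 hx.1, hx.2.le⟩
    have h := norm_image_sub_le_of_norm_deriv_le_segment' hIcc hbd 1
      (right_mem_Icc.mpr hε.2.le)
    rw [hφ] at h
    have h2 : M ‖γ 1‖ - M ‖γ ε‖ ≤ ‖w‖ * (1 - ε) := le_trans (le_abs_self _) h
    have h3 : ‖w‖ * (1 - ε) ≤ ‖w‖ := by
      nlinarith [norm_nonneg w, hε.1, hε.2]
    rw [hγ1] at h2
    linarith
  -- limit as ε → 0⁺
  have hγcont : ContinuousAt γ 0 := (hγd 0 ⟨le_rfl, zero_le_one⟩).continuousAt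
  have htend : Filter.Tendsto (fun ε => M ‖γ ε‖) (nhdsWithin 0 (Ioi 0)) (nhds 0) := by
    have hnorm : Filter.Tendsto (fun ε => ‖γ ε‖) (nhds 0) (nhds ‖γ 0‖) := (hγcont.norm).tendsto
    have h1 : Filter.Tendsto (fun ε => M ‖γ ε‖) (nhds 0) (nhds (M ‖γ 0‖)) :=
      ((hMd ‖γ 0‖).continuousAt.tendsto).comp hnorm
    have h2 : M ‖γ 0‖ = 0 := by rw [hγ0, norm_zero, hM0]
    rw [h2] at h1
    exact h1.mono_left nhdsWithin_le_nhds
  have hev : ∀ᶠ ε in nhdsWithin 0 (Ioi 0), M ‖z‖ - ‖w‖ ≤ M ‖γ ε‖ := by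
    filter_upwards [Ioo_mem_nhdsGT_of_mem (by constructor <;> norm_num : (0:ℝ) ∈ Ico (0:ℝ) 1)]
      with ε hε
    linarith [hεest ε hε]
  have hfinal : M ‖z‖ - ‖w‖ ≤ 0 := ge_of_tendsto htend hev
  have : M ‖z‖ ≤ ‖f z‖ := by
    rw [show ‖f z‖ = ‖w‖ from rfl]
    linarith
  exact this
end

section
/- If f is convex of order α (0 ≤ α < 1) on the unit disk with f''(0)=0, then for all z in the unit disk, (1-|z|²)²·|Sf(z)| ≤ 2(1-α²), where Sf = (f''/f')' - (1/2)(f''/f')² is the Schwarzian derivative. -/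
open Metric Set Complex


lemma real_key (α r t d : ℝ) (hα0 : 0 ≤ α) (hα1 : α ≤ 1) (hr0 : 0 ≤ r) (hr1 : r ≤ 1)
    (ht0 : 0 ≤ t) (ht1 : t ≤ 1) (hd0 : 0 ≤ d) (hSP : d * (1 - r^2) ≤ 1 - t^2) :
    (1-r^2)^2 * (t + r*d + α*r^2*t^2) ≤ (1+α) * (1-r^2*t)^2 := by
  have hrr : (0:ℝ) ≤ r*(1-r^2) := mul_nonneg hr0 (by nlinarith)
  have h1 : (1-r^2)^2 * (r*d) ≤ r*(1-t^2)*(1-r^2) := by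
    nlinarith [mul_le_mul_of_nonneg_left hSP hrr]
  have hF0 : t*(1-r^2)^2 + r*(1-t^2)*(1-r^2) ≤ (1-r^2*t)^2 := by
    nlinarith [mul_nonneg (mul_nonneg (sub_nonneg.2 ht1) (sub_nonneg.2 ht1)) (by nlinarith : (0:ℝ) ≤ 1 - r + r^3),
      mul_nonneg (mul_nonneg (sub_nonneg.2 ht1) ht0) (by nlinarith [mul_nonneg (sub_nonneg.2 hr1) (sq_nonneg (1-r)), mul_nonneg (mul_nonneg (sub_nonneg.2 hr1) (sub_nonneg.2 hr1)) (sub_nonneg.2 hr1)] : (0:ℝ) ≤ (1-r)^3*(1+r))]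
  have hs1 : (0:ℝ) ≤ 1 - r^2*t + r*t - r^3*t := by
    have h2 : (0:ℝ) ≤ 1 - (r^3+r^2-r) := by nlinarith [mul_nonneg (sub_nonneg.2 hr1) (sq_nonneg (1+r))]
    nlinarith [mul_nonneg ht0 h2]
  have hs2 : (0:ℝ) ≤ 1 - r^2*t - r*t + r^3*t := by
    have hs0 : (0:ℝ) ≤ r+r^2-r^3 := by nlinarith
    have h2 : (0:ℝ) ≤ 1 - (r+r^2-r^3) := by nlinarith [mul_nonneg (sub_nonneg.2 hr1) (by nlinarith : (0:ℝ) ≤ 1 - r^2)]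
    nlinarith [mul_nonneg (sub_nonneg.2 ht1) hs0]
  have hF1 : r^2*t^2*(1-r^2)^2 ≤ (1-r^2*t)^2 := by nlinarith [mul_nonneg hs1 hs2]
  nlinarith [mul_le_mul_of_nonneg_left hF1 hα0]

lemma mobius_lt {a u : ℂ} (ha : ‖a‖ < 1) (hu : ‖u‖ < 1) :
    ‖u - a‖ < ‖1 - (starRingEnd ℂ) a * u‖ := by
  have h : Complex.normSq (1 - (starRingEnd ℂ) a * u) - Complex.normSq (u - a)
      = (1 - Complex.normSq a) * (1 - Complex.normSq u) := by
    simp [Complex.normSq_apply, Complex.mul_re, Complex.mul_im, Complex.sub_re, Complex.sub_im]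
    ring
  have ha' : Complex.normSq a < 1 := by
    rw [← Complex.sq_norm]; nlinarith [norm_nonneg a]
  have hu' : Complex.normSq u < 1 := by
    rw [← Complex.sq_norm]; nlinarith [norm_nonneg u]
  have : Complex.normSq (u - a) < Complex.normSq (1 - (starRingEnd ℂ) a * u) := by nlinarith
  rw [Complex.norm_def, Complex.norm_def]
  exact Real.sqrt_lt_sqrt (Complex.normSq_nonneg _) this

lemma mobius_ne {a u : ℂ} (ha : ‖a‖ < 1) (hu : ‖u‖ < 1) :
    1 - (starRingEnd ℂ) a * u ≠ 0 := by
  intro h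
  have : ‖(starRingEnd ℂ) a * u‖ < 1 := by
    rw [norm_mul, Complex.norm_conj]
    exact mul_lt_one_of_nonneg_of_lt_one_left (norm_nonneg a) ha hu.le
  rw [sub_eq_zero] at h
  rw [← h] at this
  simp at this


lemma schwarz_pick {g : ℂ → ℂ} (hg : DifferentiableOn ℂ g (ball 0 1))
    (hmaps : MapsTo g (ball 0 1) (ball 0 1)) {z : ℂ} (hz : z ∈ ball (0:ℂ) 1) :
    ‖deriv g z‖ * (1 - ‖z‖ ^ 2) ≤ 1 - ‖g z‖ ^ 2 := by
  have hz1 : ‖z‖ < 1 := by simpa [mem_ball, dist_eq] using hz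
  set a : ℂ := g z with ha_def
  have ha : ‖a‖ < 1 := by simpa [mem_ball, dist_eq] using hmaps hz
  set σ : ℂ → ℂ := fun w => (w - (-z)) / (1 - (starRingEnd ℂ) (-z) * w) with hσ_def
  have hσ_mem : ∀ w ∈ ball (0:ℂ) 1, σ w ∈ ball (0:ℂ) 1 := by
    intro w hw
    have hw1 : ‖w‖ < 1 := by simpa [mem_ball, dist_eq] using hw
    have := mobius_lt (a := -z) (by simpa using hz1) hw1
    have hne := mobius_ne (a := -z) (by simpa using hz1) hw1
    simp only [mem_ball, dist_eq, sub_zero, hσ_def]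
    rw [norm_div, div_lt_one (norm_pos_iff.mpr hne)]
    exact this
  have hσ0 : σ 0 = z := by simp [hσ_def]
  have hσ_diffAt : ∀ w ∈ ball (0:ℂ) 1, DifferentiableAt ℂ σ w := by
    intro w hw
    have hw1 : ‖w‖ < 1 := by simpa [mem_ball, dist_eq] using hw
    have hne := mobius_ne (a := -z) (by simpa using hz1) hw1
    exact ((differentiableAt_id.sub_const _).div
      (((differentiable_const _).differentiableAt.mul differentiableAt_id).const_sub 1) hne)
  set χ : ℂ → ℂ := fun w => (g (σ w) - a) / (1 - (starRingEnd ℂ) a * g (σ w)) with hχ_def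
  have hgσ_diffAt : ∀ w ∈ ball (0:ℂ) 1, DifferentiableAt ℂ (fun w => g (σ w)) w := by
    intro w hw
    exact ((hg (σ w) (hσ_mem w hw)).differentiableAt
      (isOpen_ball.mem_nhds (hσ_mem w hw))).comp w (hσ_diffAt w hw)
  have hgσ_mem : ∀ w ∈ ball (0:ℂ) 1, ‖g (σ w)‖ < 1 := by
    intro w hw
    simpa [mem_ball, dist_eq] using hmaps (hσ_mem w hw)
  have hχ_diff : DifferentiableOn ℂ χ (ball 0 1) := by
    intro w hw
    exact (((hgσ_diffAt w hw).sub_const a).div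
      (((differentiable_const _).differentiableAt.mul (hgσ_diffAt w hw)).const_sub 1)
      (mobius_ne ha (hgσ_mem w hw))).differentiableWithinAt
  have hχ0 : χ 0 = 0 := by
    simp only [hχ_def, hσ0]
    rw [div_eq_zero_iff]
    left; simp [ha_def]
  have hχ_maps : MapsTo χ (ball 0 1) (ball (χ 0) 1) := by
    intro w hw
    rw [hχ0]
    have := mobius_lt ha (hgσ_mem w hw)
    simpa [mem_ball, dist_eq, hχ_def, norm_div,
      div_lt_one (norm_pos_iff.mpr (mobius_ne ha (hgσ_mem w hw)))] using this
  have hschwarz := Complex.norm_deriv_le_div_of_mapsTo_ball hχ_diff (hχ_maps.mono_right ball_subset_closedBall) one_pos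
  -- compute deriv χ 0
  set d := deriv g z with hd_def
  have hσd : HasDerivAt σ (1 - z * (starRingEnd ℂ) z) 0 := by
    have hN : HasDerivAt (fun w : ℂ => w - (-z)) 1 0 := (hasDerivAt_id 0).sub_const _
    have hD : HasDerivAt (fun w : ℂ => 1 - (starRingEnd ℂ) (-z) * w) (-((starRingEnd ℂ) (-z))) 0 := by
      simpa using ((hasDerivAt_id (0:ℂ)).const_mul ((starRingEnd ℂ) (-z))).const_sub 1
    have hne : (1 - (starRingEnd ℂ) (-z) * 0) ≠ 0 := by simp
    have := hN.div hD hne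
    simp only [mul_zero, sub_zero, zero_sub, map_neg] at this
    refine this.congr_deriv ?_
    field_simp
  have hgd : HasDerivAt g d z := ((hg z hz).differentiableAt (isOpen_ball.mem_nhds hz)).hasDerivAt
  have hgσd : HasDerivAt (fun w => g (σ w)) (d * (1 - z * (starRingEnd ℂ) z)) 0 := by
    have := (hσ0 ▸ hgd).comp 0 hσd
    exact this
  have hNd : HasDerivAt (fun w => g (σ w) - a) (d * (1 - z * (starRingEnd ℂ) z)) 0 :=
    hgσd.sub_const a
  have hDd : HasDerivAt (fun w => 1 - (starRingEnd ℂ) a * g (σ w))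
      (-((starRingEnd ℂ) a * (d * (1 - z * (starRingEnd ℂ) z)))) 0 :=
    (hgσd.const_mul ((starRingEnd ℂ) a)).const_sub 1
  have hD0ne : (1 - (starRingEnd ℂ) a * g (σ 0)) ≠ 0 := by
    rw [hσ0]; exact mobius_ne ha (by rwa [← ha_def])
  have hχd : HasDerivAt χ (d * (1 - z * (starRingEnd ℂ) z) / (1 - (starRingEnd ℂ) a * a)) 0 := by
    have hane : (1 : ℂ) - (starRingEnd ℂ) a * a ≠ 0 := mobius_ne ha ha
    have := hNd.div hDd hD0ne
    refine this.congr_deriv ?_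
    rw [hσ0, ← ha_def]
    field_simp
    ring
  have hderiv : deriv χ 0 = d * (1 - z * (starRingEnd ℂ) z) / (1 - (starRingEnd ℂ) a * a) :=
    hχd.deriv
  rw [hderiv] at hschwarz
  have key : ∀ w : ℂ, ‖w‖ < 1 →
      ‖1 - w * (starRingEnd ℂ) w‖ = 1 - ‖w‖ ^ 2 := by
    intro w hw
    have h1 : w * (starRingEnd ℂ) w = ((‖w‖ ^ 2 : ℝ) : ℂ) := by
      rw [Complex.mul_conj]; norm_cast; exact (Complex.sq_norm w).symm
    rw [h1]
    rw [show (1 : ℂ) - ((‖w‖ ^ 2 : ℝ) : ℂ) = (((1 - ‖w‖ ^ 2 : ℝ)) : ℂ) by push_cast; ring]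
    rw [Complex.norm_real, Real.norm_eq_abs]
    rw [_root_.abs_of_nonneg (by nlinarith [norm_nonneg w])]
  have habs1 : ‖1 - z * (starRingEnd ℂ) z‖ = 1 - ‖z‖ ^ 2 := key z hz1
  have habs2 : ‖1 - (starRingEnd ℂ) a * a‖ = 1 - ‖a‖ ^ 2 := by
    rw [mul_comm]; exact key a ha
  rw [norm_div, norm_mul, habs1, habs2] at hschwarz
  have hpos : (0:ℝ) < 1 - ‖a‖ ^ 2 := by nlinarith [norm_nonneg a]
  have := (div_le_one hpos).mp (by simpa using hschwarz)
  exact this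


lemma dslope_sq_eq {g : ℂ → ℂ} (h0 : g 0 = 0) (h1 : deriv g 0 = 0) (w : ℂ) :
    g w = w^2 * dslope (dslope g 0) 0 w := by
  rcases eq_or_ne w 0 with rfl | hw
  · simp [h0]
  · rw [dslope_of_ne _ hw, slope_def_field, dslope_of_ne _ hw, slope_def_field, dslope_same, h0, h1]
    field_simp
    ring

lemma dslope_sq_bound {g : ℂ → ℂ} (hg : DifferentiableOn ℂ g (ball 0 1))
    (hmaps : MapsTo g (ball 0 1) (ball 0 1)) (h0 : g 0 = 0) (h1 : deriv g 0 = 0)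
    {z : ℂ} (hz : z ∈ ball (0:ℂ) 1) :
    ‖dslope (dslope g 0) 0 z‖ ≤ 1 := by
  have hz1 : ‖z‖ < 1 := by simpa [mem_ball, dist_eq] using hz
  set g1 := dslope g 0 with hg1_def
  set φ := dslope g1 0 with hφ_def
  have hg1_diff : DifferentiableOn ℂ g1 (ball 0 1) :=
    (Complex.differentiableOn_dslope (ball_mem_nhds 0 one_pos)).mpr hg
  have hg10 : g1 0 = 0 := by rw [hg1_def, dslope_same, h1]
  suffices h : ∀ᶠ r in nhdsWithin (1:ℝ) (Set.Iio 1), ‖φ z‖ ≤ 1 / ((r+1)/2)^2 by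
    have htend : Filter.Tendsto (fun r : ℝ => 1 / ((r+1)/2)^2) (nhdsWithin (1:ℝ) (Set.Iio 1)) (nhds 1) := by
      have : Filter.Tendsto (fun r : ℝ => 1 / ((r+1)/2)^2) (nhds 1) (nhds (1 / ((1+1)/2)^2)) := by
        apply Filter.Tendsto.div tendsto_const_nhds
        · exact (((continuous_id.add continuous_const).div_const 2).pow 2).tendsto 1
        · norm_num
      simpa using this.mono_left nhdsWithin_le_nhds
    exact ge_of_tendsto htend h
  filter_upwards [Ioo_mem_nhdsLT_of_mem ⟨hz1, le_rfl⟩] with r hr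
  set r2 := (r+1)/2 with hr2_def
  set r3 := (r2+1)/2 with hr3_def
  have hzr : ‖z‖ < r := hr.1
  have hr0 : (0:ℝ) < r := lt_of_le_of_lt (norm_nonneg z) hzr
  have hrr2 : r < r2 := by rw [hr2_def]; linarith [hr.2]
  have hr21 : r2 < 1 := by rw [hr2_def]; linarith [hr.2]
  have hr20 : (0:ℝ) < r2 := lt_trans hr0 hrr2
  have hr23 : r2 < r3 := by rw [hr3_def]; linarith
  have hr31 : r3 < 1 := by rw [hr3_def]; linarith
  have hr30 : (0:ℝ) < r3 := lt_trans hr20 hr23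
  have step1 : ∀ w ∈ ball (0:ℂ) r3, ‖g1 w‖ ≤ 1 / r3 := by
    intro w hw
    have hsub : ball (0:ℂ) r3 ⊆ ball 0 1 := ball_subset_ball hr31.le
    have hm : MapsTo g (ball (0:ℂ) r3) (ball (g 0) 1) := by
      rw [h0]; exact fun x hx => hmaps (hsub hx)
    exact Complex.norm_dslope_le_div_of_mapsTo_ball (hg.mono hsub) (hm.mono_right ball_subset_closedBall) hw
  have step2 : ‖φ z‖ ≤ (1/r2) / r2 := by
    have hsub : ball (0:ℂ) r2 ⊆ ball 0 1 := ball_subset_ball hr21.le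
    have hm : MapsTo g1 (ball (0:ℂ) r2) (ball (g1 0) (1/r2)) := by
      rw [hg10]
      intro x hx
      have hle : ‖g1 x‖ ≤ 1/r3 := step1 x (ball_subset_ball hr23.le hx)
      rw [mem_ball, dist_zero_right]
      exact lt_of_le_of_lt hle (by
        apply one_div_lt_one_div_of_lt hr20 hr23)
    exact Complex.norm_dslope_le_div_of_mapsTo_ball (hg1_diff.mono hsub) (hm.mono_right ball_subset_closedBall)
      (by rw [mem_ball, dist_zero_right]; exact lt_trans hzr hrr2)
  calc ‖φ z‖ = ‖φ z‖ := rfl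
    _ ≤ (1/r2) / r2 := step2
    _ = 1 / ((r+1)/2)^2 := by rw [hr2_def]; field_simp

theorem convex_order_alpha_zero_second_deriv_schwarzian_bound
    (f : ℂ → ℂ) (α : ℝ) (hα0 : 0 ≤ α) (hα1 : α < 1)
    (hf : DifferentiableOn ℂ f (Metric.ball 0 1))
    (hf' : ∀ z ∈ Metric.ball (0:ℂ) 1, deriv f z ≠ 0)
    (hf0 : f 0 = 0) (hf1 : deriv f 0 = 1) (hf2 : deriv (deriv f) 0 = 0)
    (hconv : ∀ z ∈ Metric.ball (0:ℂ) 1,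
      α < (1 + z * (deriv (deriv f) z / deriv f z)).re) :
    ∀ z ∈ Metric.ball (0:ℂ) 1,
      (1 - ‖z‖ ^ 2) ^ 2 *
        ‖deriv (deriv (deriv f)) z / deriv f z
          - 3 / 2 * (deriv (deriv f) z / deriv f z) ^ 2‖
        ≤ 2 * (1 - α ^ 2) := by
  intro z hz
  have h01 : (0:ℂ) ∈ ball (0:ℂ) 1 := by simp
  have hfa : AnalyticOnNhd ℂ f (ball 0 1) := hf.analyticOnNhd isOpen_ball
  have hf1a : AnalyticOnNhd ℂ (deriv f) (ball 0 1) := hfa.deriv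
  have hf2a : AnalyticOnNhd ℂ (deriv (deriv f)) (ball 0 1) := hf1a.deriv
  set q : ℂ → ℂ := fun w => deriv (deriv f) w / deriv f w with hq_def
  have hq_hasD : ∀ w ∈ ball (0:ℂ) 1, HasDerivAt q
      ((deriv (deriv (deriv f)) w * deriv f w - deriv (deriv f) w * deriv (deriv f) w)
        / (deriv f w)^2) w := by
    intro w hw
    exact HasDerivAt.div ((hf2a w hw).differentiableAt.hasDerivAt)
      ((hf1a w hw).differentiableAt.hasDerivAt) (hf' w hw)
  have hq_diffAt : ∀ w ∈ ball (0:ℂ) 1, DifferentiableAt ℂ q w :=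
    fun w hw => (hq_hasD w hw).differentiableAt
  have hq0 : q 0 = 0 := by rw [hq_def]; simp [hf2]
  set c : ℂ := 2 - 2*(α:ℂ) with hc_def
  have hH : ∀ w ∈ ball (0:ℂ) 1, 1 - α < (w * q w + c).re := by
    intro w hw
    have h := hconv w hw
    have h1 : (1 + w * q w).re = 1 + (w * q w).re := by simp
    have h2 : (w * q w + c).re = (w * q w).re + (2 - 2*α) := by
      rw [hc_def]; simp [Complex.add_re, Complex.sub_re, Complex.ofReal_re]
    rw [h1] at h; rw [h2]; linarith
  have hHne : ∀ w ∈ ball (0:ℂ) 1, w * q w + c ≠ 0 := by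
    intro w hw h
    have := hH w hw
    rw [h] at this
    simp at this
    linarith
  set ω : ℂ → ℂ := fun w => w * q w / (w * q w + c) with hω_def
  have hω0 : ω 0 = 0 := by rw [hω_def]; simp
  have hω_diffOn : DifferentiableOn ℂ ω (ball 0 1) := by
    intro w hw
    exact ((differentiableAt_id.mul (hq_diffAt w hw)).div
      ((differentiableAt_id.mul (hq_diffAt w hw)).add_const c) (hHne w hw)).differentiableWithinAt
  have hω_maps : MapsTo ω (ball 0 1) (ball 0 1) := by
    intro w hw
    set A := w * q w with hA_def
    have hA : α - 1 < A.re := by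
      have := hH w hw
      have h2 : (A + c).re = A.re + (2 - 2*α) := by
        rw [hc_def]; simp [Complex.add_re, Complex.sub_re, Complex.ofReal_re]
      rw [h2] at this; linarith
    have hlt : Complex.normSq A < Complex.normSq (A + c) := by
      rw [hc_def]
      have : A + (2 - 2*(α:ℂ)) = A + ((2 - 2*α : ℝ) : ℂ) := by push_cast; ring
      rw [this]
      simp only [Complex.normSq_apply, Complex.add_re, Complex.add_im, Complex.ofReal_re,
        Complex.ofReal_im]
      nlinarith
    have habs : ‖A‖ < ‖A + c‖ := by
      rw [Complex.norm_def, Complex.norm_def]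
      exact Real.sqrt_lt_sqrt (Complex.normSq_nonneg _) hlt
    rw [mem_ball, dist_zero_right, hω_def]
    simp only [norm_div]
    rw [div_lt_one (by
      have h0 : (0:ℝ) ≤ ‖A‖ := norm_nonneg A
      calc (0:ℝ) ≤ ‖A‖ := h0
        _ < ‖A + c‖ := habs)]
    exact habs
  have hω'0 : deriv ω 0 = 0 := by
    have hN : HasDerivAt (fun w : ℂ => w * q w) (1 * q 0 + 0 * ((deriv (deriv (deriv f)) 0 * deriv f 0 - deriv (deriv f) 0 * deriv (deriv f) 0) / (deriv f 0)^2)) 0 :=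
      (hasDerivAt_id 0).mul (hq_hasD 0 h01)
    rw [hq0] at hN
    simp only [mul_zero, zero_mul, add_zero] at hN
    have hD : HasDerivAt (fun w : ℂ => w * q w + c) 0 0 := hN.add_const c
    have h0c : (fun w : ℂ => w * q w) 0 + c ≠ 0 := by simpa using hHne 0 h01
    have := hN.div hD (by simpa using h0c)
    have h00 : (fun w : ℂ => w * q w) 0 = 0 := by simp
    rw [hω_def]
    refine HasDerivAt.deriv ?_
    refine this.congr_deriv ?_
    simp
  set φ : ℂ → ℂ := dslope (dslope ω 0) 0 with hφ_def
  have hφ_diffOn : DifferentiableOn ℂ φ (ball 0 1) := by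
    rw [hφ_def]
    rw [Complex.differentiableOn_dslope (ball_mem_nhds 0 one_pos)]
    rw [Complex.differentiableOn_dslope (ball_mem_nhds 0 one_pos)]
    exact hω_diffOn
  have hφ_bound : ∀ w ∈ ball (0:ℂ) 1, ‖φ w‖ ≤ 1 :=
    fun w hw => dslope_sq_bound hω_diffOn hω_maps hω0 hω'0 hw
  have hωφ : ∀ w : ℂ, ω w = w^2 * φ w := fun w => dslope_sq_eq hω0 hω'0 w
  -- key identity
  have hkey : ∀ w ∈ ball (0:ℂ) 1, q w * (1 - w^2 * φ w) = c * w * φ w := by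
    intro w hw
    rcases eq_or_ne w 0 with rfl | hwne
    · rw [hq0]; simp
    · obtain ⟨A, hA⟩ : ∃ A, w * q w = A := ⟨_, rfl⟩
      have hne : A + c ≠ 0 := hA ▸ hHne w hw
      have hωw : ω w = A / (A + c) := by rw [hω_def]; simp only; rw [hA]
      have h1 : w * q w * (1 - ω w) = c * ω w := by
        rw [hωw, hA]
        field_simp
        ring
      rw [hωφ w] at h1
      have h2 : w * (q w * (1 - w ^ 2 * φ w)) = w * (c * w * φ w) := by
        linear_combination h1
      exact mul_left_cancel₀ hwne h2
  -- derivatives at z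
  have hmem : ball (0:ℂ) 1 ∈ nhds z := isOpen_ball.mem_nhds hz
  set Φ := φ z with hΦ_def
  set Φ' := deriv φ z with hΦ'_def
  set Q := q z with hQ_def
  set Qd := (deriv (deriv (deriv f)) z * deriv f z - deriv (deriv f) z * deriv (deriv f) z) / (deriv f z)^2 with hQd_def
  have hφ_hasD : HasDerivAt φ Φ' z :=
    ((hφ_diffOn z hz).differentiableAt hmem).hasDerivAt
  have hq_hasDz : HasDerivAt q Qd z := hq_hasD z hz
  have hinner : HasDerivAt (fun x : ℂ => 1 - x^2 * φ x) (-((2:ℂ)*z*Φ + z^2*Φ')) z := by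
    have h := ((hasDerivAt_pow 2 z).mul hφ_hasD).const_sub (1:ℂ)
    norm_num at h
    refine h.congr_deriv ?_
    ring
  have hL : HasDerivAt (fun w => q w * (1 - w^2 * φ w))
      (Qd * (1 - z^2 * Φ) + Q * (-((2:ℂ)*z*Φ + z^2*Φ'))) z := hq_hasDz.mul hinner
  have hR : HasDerivAt (fun w => c * w * φ w) (c * 1 * Φ + c * z * Φ') z :=
    ((hasDerivAt_id z).const_mul c).mul hφ_hasD
  have hE2 : Qd * (1 - z^2 * Φ) + Q * (-((2:ℂ)*z*Φ + z^2*Φ')) = c * 1 * Φ + c * z * Φ' := by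
    rw [← hL.deriv, ← hR.deriv]
    apply Filter.EventuallyEq.deriv_eq
    filter_upwards [hmem] with w hw
    rw [hkey w hw]
  have hE1 : Q * (1 - z^2 * Φ) = c * z * Φ := hkey z hz
  set u : ℂ := 1 - z^2 * Φ with hu_def
  have hωz : ‖z^2 * Φ‖ < 1 := by
    have h := hω_maps hz
    rw [mem_ball, dist_zero_right] at h
    rw [hωφ z] at h
    exact h
  have hune : u ≠ 0 := by
    rw [hu_def]
    intro h
    rw [sub_eq_zero] at h
    rw [← h] at hωz
    simp at hωz
  set W : ℂ := Φ + z*Φ' + (α:ℂ)*(z^2*Φ^2) with hW_def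
  have hS : (Qd - Q^2/2) * u^2 = c * W := by
    rw [hW_def, hu_def]
    linear_combination (1 - z^2*Φ) * hE2 + (2*z*Φ + z^2*Φ' - Q*(1 - z^2*Φ)/2 - c*z*Φ/2) * hE1
      + (-(c*z^2*Φ^2)/2) * hc_def
  -- real estimates
  set rr := ‖z‖ with hrr_def
  set tt := ‖Φ‖ with htt_def
  set dd := ‖Φ'‖ with hdd_def
  have hrr1 : rr < 1 := by rw [hrr_def]; simpa [mem_ball, dist_eq] using hz
  have htt1 : tt ≤ 1 := hφ_bound z hz
  have hrr0 : 0 ≤ rr := norm_nonneg z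
  have htt0 : 0 ≤ tt := norm_nonneg Φ
  have hdd0 : 0 ≤ dd := norm_nonneg Φ'
  have hSP : dd * (1 - rr^2) ≤ 1 - tt^2 := by
    by_cases hcase : ∀ w ∈ ball (0:ℂ) 1, ‖φ w‖ < 1
    · have hm : MapsTo φ (ball 0 1) (ball 0 1) := fun w hw => by
        rw [mem_ball, dist_zero_right]; exact hcase w hw
      exact schwarz_pick hφ_diffOn hm hz
    · push_neg at hcase
      obtain ⟨w₀, hw₀, h1le⟩ := hcase
      have hmax : IsMaxOn (norm ∘ φ) (ball 0 1) w₀ := by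
        intro w hw
        simp only [Function.comp_apply, Set.mem_setOf_eq]
        calc ‖φ w‖ ≤ 1 := hφ_bound w hw
          _ ≤ ‖φ w₀‖ := h1le
      have heq := Complex.eqOn_of_isPreconnected_of_isMaxOn_norm
        (convex_ball (0:ℂ) 1).isPreconnected isOpen_ball hφ_diffOn hw₀ hmax
      have htt_eq : tt = 1 := by
        have h1 : φ z = φ w₀ := heq hz
        have h2 : ‖φ w₀‖ ≤ 1 := hφ_bound w₀ hw₀
        rw [htt_def, hΦ_def, h1]
        linarith [le_antisymm h2 h1le]
      have hdd_eq : dd = 0 := by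
        have h1 : deriv φ z = 0 := by
          have hev : φ =ᶠ[nhds z] (fun _ => φ w₀) := by
            filter_upwards [hmem] with w hw
            exact heq hw
          rw [hev.deriv_eq]
          exact deriv_const z (φ w₀)
        rw [hdd_def, hΦ'_def, h1]
        simp
      rw [htt_eq, hdd_eq]
      norm_num
  have habsc : ‖c‖ = 2 - 2*α := by
    rw [hc_def, show (2:ℂ) - 2*(α:ℂ) = ((2 - 2*α : ℝ) : ℂ) by push_cast; ring,
      Complex.norm_real, Real.norm_eq_abs]
    rw [_root_.abs_of_nonneg (by linarith)]
  have habsS : ‖Qd - Q^2/2‖ * (‖u‖)^2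
      = (2 - 2*α) * ‖W‖ := by
    have h := congrArg (‖·‖) hS
    rw [norm_mul, norm_pow, norm_mul, habsc] at h
    exact h
  have hW_le : ‖W‖ ≤ tt + rr*dd + α*rr^2*tt^2 := by
    rw [hW_def]
    calc ‖Φ + z*Φ' + (α:ℂ)*(z^2*Φ^2)‖
        ≤ ‖Φ + z*Φ'‖ + ‖(α:ℂ)*(z^2*Φ^2)‖ := norm_add_le _ _
      _ ≤ ‖Φ‖ + ‖z*Φ'‖ + ‖(α:ℂ)*(z^2*Φ^2)‖ := by
          linarith [norm_add_le Φ (z*Φ')]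
      _ = tt + rr*dd + α*rr^2*tt^2 := by
          simp only [norm_mul, norm_pow, Complex.norm_real, Real.norm_eq_abs, _root_.abs_of_nonneg hα0]
          rw [hrr_def, htt_def, hdd_def]
          ring
  have hu_lb : 1 - rr^2*tt ≤ ‖u‖ := by
    have h := norm_sub_norm_le (1:ℂ) (z^2*Φ)
    rw [hu_def]
    simpa [norm_pow] using h
  have h1rt : 0 ≤ 1 - rr^2*tt := by nlinarith
  have hu2pos : 0 < (‖u‖)^2 := by
    have := norm_pos_iff.mpr hune
    positivity
  have hkr := real_key α rr tt dd hα0 hα1.le hrr0 hrr1.le htt0 htt1 hdd0 hSP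
  have h3 : (1-rr^2)^2 * ‖W‖ ≤ (1+α) * (‖u‖)^2 := by
    calc (1-rr^2)^2 * ‖W‖ ≤ (1-rr^2)^2 * (tt + rr*dd + α*rr^2*tt^2) :=
          mul_le_mul_of_nonneg_left hW_le (sq_nonneg _)
      _ ≤ (1+α) * (1-rr^2*tt)^2 := hkr
      _ ≤ (1+α) * (‖u‖)^2 := by
          apply mul_le_mul_of_nonneg_left (pow_le_pow_left₀ h1rt hu_lb 2) (by linarith)
  -- conclude
  have hQval : Q = deriv (deriv f) z / deriv f z := by rw [hQ_def, hq_def]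
  have hgoal_eq : deriv (deriv (deriv f)) z / deriv f z
      - 3 / 2 * (deriv (deriv f) z / deriv f z) ^ 2 = Qd - Q^2/2 := by
    rw [hQd_def, hQval]
    field_simp [hf' z hz]
    ring
  rw [hgoal_eq, ← mul_le_mul_iff_of_pos_right hu2pos]
  calc (1-rr^2)^2 * ‖Qd - Q^2/2‖ * (‖u‖)^2
      = (1-rr^2)^2 * (‖Qd - Q^2/2‖ * (‖u‖)^2) := by ring
    _ = (2-2*α) * ((1-rr^2)^2 * ‖W‖) := by rw [habsS]; ring
    _ ≤ (2-2*α) * ((1+α) * (‖u‖)^2) :=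
        mul_le_mul_of_nonneg_left h3 (by linarith)
    _ = 2*(1-α^2) * (‖u‖)^2 := by ring
end

section
/- For 0 ≤ α < 1, the function f_α with f_α'(z) = (1-z²)^{-(1-α)} on the unit disk satisfies sup over z in the unit disk of (1-|z|²)²·|Sf_α(z)| equal to 2(1-α²). -/
open Complex Metric Set Filter Topology

lemma mem_slit {z : ℂ} (hz : ‖z‖ < 1) : 1 - z ^ 2 ∈ Complex.slitPlane := by
  rw [Complex.mem_slitPlane_iff]
  by_cases h : (1 - z ^ 2).im = 0
  · left
    have him : z.re * z.im = 0 := by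
      have : (1 - z^2).im = -(2 * (z.re * z.im)) := by
        simp [pow_two, Complex.sub_im, Complex.mul_im]; ring
      rw [this] at h; linarith
    have hre : (1 - z^2).re = 1 - (z.re^2 - z.im^2) := by
      simp [pow_two, Complex.sub_re, Complex.mul_re]
    rcases mul_eq_zero.mp him with h0 | h0
    · have : |z.im| ≤ ‖z‖ := Complex.abs_im_le_norm z
      rw [hre, h0]; nlinarith [abs_nonneg z.im, le_abs_self z.im, neg_abs_le z.im]
    · have : |z.re| ≤ ‖z‖ := Complex.abs_re_le_norm z
      rw [hre, h0]; nlinarith [abs_nonneg z.re, le_abs_self z.re, neg_abs_le z.re]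
  · right; exact h

lemma base_hasDeriv (z : ℂ) : HasDerivAt (fun z : ℂ => 1 - z ^ 2) (-(2 * z)) z := by
  simpa using ((hasDerivAt_pow 2 z).const_sub 1)

lemma g_hasDeriv (c z : ℂ) (hz : ‖z‖ < 1) :
    HasDerivAt (fun z : ℂ => (1 - z ^ 2) ^ c)
      (c * (1 - z ^ 2) ^ (c - 1) * (-(2 * z))) z :=
  (base_hasDeriv z).cpow_const (mem_slit hz)

lemma g1_hasDeriv (c z : ℂ) (hz : ‖z‖ < 1) :
    HasDerivAt (fun z : ℂ => c * (1 - z ^ 2) ^ (c - 1) * (-(2 * z)))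
      ((c * ((c - 1) * (1 - z ^ 2) ^ (c - 1 - 1) * (-(2 * z)))) * (-(2 * z))
        + (c * (1 - z ^ 2) ^ (c - 1)) * (-2)) z := by
  have h1 : HasDerivAt (fun z : ℂ => c * (1 - z ^ 2) ^ (c - 1))
      (c * ((c - 1) * (1 - z ^ 2) ^ (c - 1 - 1) * (-(2 * z)))) z :=
    (((base_hasDeriv z).cpow_const (mem_slit hz)) : HasDerivAt (fun z : ℂ => (1 - z^2) ^ (c-1)) _ z).const_mul c
  have h2 : HasDerivAt (fun z : ℂ => -(2 * z)) (-2) z := by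
    exact ((hasDerivAt_id z).const_mul (2:ℂ)).neg.congr_deriv (by simp)
  exact h1.mul h2

lemma schwarzian_value (c z : ℂ) (hz : ‖z‖ < 1) :
    ((c * ((c - 1) * (1 - z ^ 2) ^ (c - 1 - 1) * (-(2 * z)))) * (-(2 * z))
        + (c * (1 - z ^ 2) ^ (c - 1)) * (-2)) / (1 - z ^ 2) ^ c
      - 3 / 2 * ((c * (1 - z ^ 2) ^ (c - 1) * (-(2 * z))) / (1 - z ^ 2) ^ c) ^ 2
      = -2 * c * (1 + (c + 1) * z ^ 2) / (1 - z ^ 2) ^ 2 := by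
  have hw0 : (1 - z ^ 2) ≠ 0 := Complex.slitPlane_ne_zero (mem_slit hz)
  have hA : (1 - z ^ 2) ^ c ≠ 0 := fun h => hw0 (Complex.cpow_eq_zero_iff _ c |>.mp h).1
  have e1 : (1 - z ^ 2) ^ (c - 1) = (1 - z ^ 2) ^ c / (1 - z ^ 2) := by
    rw [Complex.cpow_sub _ _ hw0, Complex.cpow_one]
  have e2 : (1 - z ^ 2) ^ (c - 1 - 1) = (1 - z ^ 2) ^ c / (1 - z ^ 2) / (1 - z ^ 2) := by
    rw [Complex.cpow_sub _ _ hw0, Complex.cpow_one, e1]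
  rw [e1, e2]
  have key : ∀ w A : ℂ, w ≠ 0 → A ≠ 0 →
      ((c * ((c - 1) * (A / w / w) * (-(2 * z)))) * (-(2 * z)) + (c * (A / w)) * (-2)) / A
        - 3 / 2 * ((c * (A / w) * (-(2 * z))) / A) ^ 2
      = (4 * c * (c - 1) * z ^ 2 - 2 * c * w - 6 * c ^ 2 * z ^ 2) / w ^ 2 := by
    intro w A hw hA'
    rw [eq_div_iff (pow_ne_zero 2 hw)]
    field_simp
    have e1 : A ^ 3 * A⁻¹ ^ 3 = 1 := by rw [← mul_pow, mul_inv_cancel₀ hA', one_pow]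
    have e2 : w ^ 5 * w⁻¹ ^ 5 = 1 := by rw [← mul_pow, mul_inv_cancel₀ hw, one_pow]
    ring
  rw [key _ _ hw0 hA]
  rw [div_eq_div_iff (pow_ne_zero 2 hw0) (pow_ne_zero 2 hw0)]
  ring

lemma bound_aux (α a B D : ℝ) (hα0 : 0 ≤ α) (hα1 : α < 1) (ha0 : 0 ≤ a) (ha1 : a < 1)
    (hDge : 1 - a ^ 2 ≤ D) (hB0 : 0 ≤ B) (hBle : B ≤ 1 + α * a ^ 2) (hDpos : 0 < D) :
    (1 - a ^ 2) ^ 2 * (2 * (1 - α) * B / D ^ 2) ≤ 2 * (1 - α ^ 2) := by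
  rw [mul_div_assoc', div_le_iff₀ (by positivity)]
  have h2 : (0:ℝ) ≤ 1 - a ^ 2 := by nlinarith
  have hD2 : (1 - a ^ 2) ^ 2 ≤ D ^ 2 := by nlinarith [mul_self_le_mul_self h2 hDge]
  have hBB : B ≤ 1 + α := by nlinarith [mul_nonneg hα0 h2]
  nlinarith [mul_le_mul hD2 (show 2 * (1 - α) * B ≤ 2 * (1 - α) * (1 + α) from by nlinarith)
    (mul_nonneg (by nlinarith) hB0) (sq_nonneg D)]

theorem extremal_map_schwarzian_norm
    (α : ℝ) (hα0 : 0 ≤ α) (hα1 : α < 1)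
    (f : ℂ → ℂ)
    (hf' : ∀ z ∈ Metric.ball (0:ℂ) 1, deriv f z = (1 - z ^ 2) ^ ((α : ℂ) - 1)) :
    sSup ((fun z => (1 - ‖z‖ ^ 2) ^ 2 *
        ‖deriv (deriv (deriv f)) z / deriv f z
          - 3 / 2 * (deriv (deriv f) z / deriv f z) ^ 2‖) '' Metric.ball (0:ℂ) 1)
      = 2 * (1 - α ^ 2) := by
  set c : ℂ := (α : ℂ) - 1 with hc
  have habs : ∀ z ∈ Metric.ball (0:ℂ) 1, ‖z‖ < 1 := by
    intro z hz; simpa [Complex.dist_eq] using Metric.mem_ball.mp hz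
  have hg1 : ∀ z ∈ Metric.ball (0:ℂ) 1,
      deriv (deriv f) z = c * (1 - z ^ 2) ^ (c - 1) * (-(2 * z)) := by
    intro z hz
    have heq : deriv f =ᶠ[nhds z] fun z => (1 - z ^ 2) ^ c :=
      Filter.eventuallyEq_of_mem (Metric.isOpen_ball.mem_nhds hz) hf'
    rw [heq.deriv_eq, (g_hasDeriv c z (habs z hz)).deriv]
  have hg2 : ∀ z ∈ Metric.ball (0:ℂ) 1,
      deriv (deriv (deriv f)) z
        = (c * ((c - 1) * (1 - z ^ 2) ^ (c - 1 - 1) * (-(2 * z)))) * (-(2 * z))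
          + (c * (1 - z ^ 2) ^ (c - 1)) * (-2) := by
    intro z hz
    have heq : deriv (deriv f) =ᶠ[nhds z]
        fun z => c * (1 - z ^ 2) ^ (c - 1) * (-(2 * z)) :=
      Filter.eventuallyEq_of_mem (Metric.isOpen_ball.mem_nhds hz) hg1
    rw [heq.deriv_eq, (g1_hasDeriv c z (habs z hz)).deriv]
  have hval : ∀ z ∈ Metric.ball (0:ℂ) 1,
      (1 - ‖z‖ ^ 2) ^ 2 *
        ‖deriv (deriv (deriv f)) z / deriv f z
          - 3 / 2 * (deriv (deriv f) z / deriv f z) ^ 2‖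
      = (1 - ‖z‖ ^ 2) ^ 2 *
          ‖2 * (1 - (α:ℂ)) * (1 + (α:ℂ) * z ^ 2) / (1 - z ^ 2) ^ 2‖ := by
    intro z hz
    rw [hf' z hz, hg1 z hz, hg2 z hz]
    rw [show ((1 - z ^ 2) ^ ((α:ℂ) - 1) : ℂ) = (1 - z ^ 2) ^ c from by rw [hc]]
    rw [schwarzian_value c z (habs z hz)]
    congr 1
    rw [hc]
    congr 1
    ring
  have hbound : ∀ z : ℂ, ‖z‖ < 1 →
      (1 - ‖z‖ ^ 2) ^ 2 *
        ‖2 * (1 - (α:ℂ)) * (1 + (α:ℂ) * z ^ 2) / (1 - z ^ 2) ^ 2‖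
      ≤ 2 * (1 - α ^ 2) := by
    intro z hz
    have ha0 : 0 ≤ ‖z‖ := norm_nonneg z
    have hD0 : (1 - z ^ 2) ≠ 0 := Complex.slitPlane_ne_zero (mem_slit hz)
    have hDpos : 0 < ‖1 - z ^ 2‖ := norm_pos_iff.mpr hD0
    have hDge : 1 - ‖z‖ ^ 2 ≤ ‖1 - z ^ 2‖ := by
      have h1 := norm_add_le (1 - z ^ 2) (z ^ 2)
      have h2 : (1 - z ^ 2) + z ^ 2 = 1 := by ring
      rw [h2, norm_one, norm_pow] at h1
      linarith
    have hB0 : 0 ≤ ‖1 + (α:ℂ) * z ^ 2‖ := norm_nonneg _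
    have hBle : ‖1 + (α:ℂ) * z ^ 2‖ ≤ 1 + α * ‖z‖ ^ 2 := by
      have h3 := norm_add_le 1 ((α:ℂ) * z ^ 2)
      rwa [norm_one, norm_mul, norm_pow, Complex.norm_real, Real.norm_eq_abs, _root_.abs_of_nonneg hα0] at h3
    have habseq : ‖2 * (1 - (α:ℂ)) * (1 + (α:ℂ) * z ^ 2) / (1 - z ^ 2) ^ 2‖
        = 2 * (1 - α) * ‖1 + (α:ℂ) * z ^ 2‖ / ‖1 - z ^ 2‖ ^ 2 := by
      rw [norm_div, norm_mul, norm_pow]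
      congr 2
      rw [show (2 * (1 - (α:ℂ)) : ℂ) = ((2 * (1 - α) : ℝ) : ℂ) from by push_cast; ring,
        Complex.norm_real, Real.norm_eq_abs]
      exact _root_.abs_of_nonneg (by nlinarith)
    rw [habseq]
    exact bound_aux α (‖z‖) _ _ hα0 hα1 ha0 hz hDge hB0 hBle hDpos
  have hvalr : ∀ r : ℝ, 0 < r → r < 1 →
      (1 - ‖(r:ℂ)‖ ^ 2) ^ 2 *
        ‖2 * (1 - (α:ℂ)) * (1 + (α:ℂ) * ((r:ℂ)) ^ 2) / (1 - ((r:ℂ)) ^ 2) ^ 2‖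
      = 2 * (1 - α) * (1 + α * r ^ 2) := by
    intro r hr0 hr1
    have h1 : (2 * (1 - (α:ℂ)) * (1 + (α:ℂ) * ((r:ℂ)) ^ 2) / (1 - ((r:ℂ)) ^ 2) ^ 2)
        = (((2 * (1 - α) * (1 + α * r ^ 2) / (1 - r ^ 2) ^ 2 : ℝ)) : ℂ) := by
      push_cast; ring
    have h4 : (0:ℝ) ≤ 2 * (1 - α) * (1 + α * r ^ 2) / (1 - r ^ 2) ^ 2 := by
      apply div_nonneg _ (sq_nonneg _)
      nlinarith [mul_nonneg hα0 (sq_nonneg r)]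
    rw [h1, Complex.norm_real, Complex.norm_real, Real.norm_eq_abs, Real.norm_eq_abs, _root_.abs_of_nonneg h4,
      _root_.abs_of_pos hr0]
    have h2 : (1 : ℝ) - r ^ 2 ≠ 0 := by nlinarith
    field_simp
  apply csSup_eq_of_forall_le_of_forall_lt_exists_gt
  · exact ⟨_, Set.mem_image_of_mem _ (Metric.mem_ball_self one_pos)⟩
  · rintro x ⟨z, hz, rfl⟩
    show (1 - ‖z‖ ^ 2) ^ 2 *
        ‖deriv (deriv (deriv f)) z / deriv f z
          - 3 / 2 * (deriv (deriv f) z / deriv f z) ^ 2‖ ≤ 2 * (1 - α ^ 2)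
    rw [hval z hz]
    exact hbound z (habs z hz)
  · intro w hw
    have hcont : ContinuousAt (fun r : ℝ => 2 * (1 - α) * (1 + α * r ^ 2)) 1 := by fun_prop
    have hw1 : w < 2 * (1 - α) * (1 + α * 1 ^ 2) := by nlinarith
    have hev : ∀ᶠ r in nhds (1:ℝ), w < 2 * (1 - α) * (1 + α * r ^ 2) :=
      hcont.eventually_const_lt hw1
    haveI hne : (nhdsWithin (1:ℝ) (Set.Ioo 0 1)).NeBot :=
      right_nhdsWithin_Ioo_neBot (by norm_num)
    have hev' : ∀ᶠ r in nhdsWithin (1:ℝ) (Set.Ioo 0 1),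
        w < 2 * (1 - α) * (1 + α * r ^ 2) ∧ r ∈ Set.Ioo (0:ℝ) 1 :=
      (hev.filter_mono nhdsWithin_le_nhds).and self_mem_nhdsWithin
    obtain ⟨r, hr, hrmem⟩ := hev'.exists
    have hzmem : ((r:ℝ):ℂ) ∈ Metric.ball (0:ℂ) 1 := by
      rw [Metric.mem_ball, Complex.dist_eq]
      simpa [Complex.norm_real, Real.norm_eq_abs, _root_.abs_of_pos hrmem.1] using hrmem.2
    refine ⟨_, Set.mem_image_of_mem _ hzmem, ?_⟩
    show w < (1 - ‖((r:ℝ):ℂ)‖ ^ 2) ^ 2 *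
        ‖deriv (deriv (deriv f)) ((r:ℝ):ℂ) / deriv f ((r:ℝ):ℂ)
          - 3 / 2 * (deriv (deriv f) ((r:ℝ):ℂ) / deriv f ((r:ℝ):ℂ)) ^ 2‖
    rw [hval _ hzmem, hvalr r hrmem.1 hrmem.2]
    exact hr
end

section
/- Let f be convex of order α (0 ≤ α < 1) on the unit disk, normalized f(0)=0, f'(0)=1, and set p = |f''(0)|/(2(1-α)), assuming p < 1. Then for all z in the unit disk, (1-|z|²)²·|Sf(z)| ≤ 2(1-α)·(1 + α·(1+p)/(1-p)). -/
open Complex Metric Set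

private lemma moebius_sq_diff (b u : ℂ) :
    ‖1 - (starRingEnd ℂ) b * u‖ ^ 2 - ‖u - b‖ ^ 2
      = (1 - ‖b‖ ^ 2) * (1 - ‖u‖ ^ 2) := by
  rw [Complex.sq_norm, Complex.sq_norm, Complex.sq_norm, Complex.sq_norm]
  simp only [Complex.normSq_apply, Complex.sub_re, Complex.sub_im, Complex.mul_re,
    Complex.mul_im, Complex.conj_re, Complex.conj_im, Complex.one_re, Complex.one_im]
  ring

private lemma moebius_abs_lt {b u : ℂ} (hb : ‖b‖ < 1) (hu : ‖u‖ < 1) :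
    ‖u - b‖ < ‖1 - (starRingEnd ℂ) b * u‖ := by
  have h := moebius_sq_diff b u
  have hb0 := norm_nonneg b
  have hu0 := norm_nonneg u
  have h1 : 0 < (1 - ‖b‖ ^ 2) * (1 - ‖u‖ ^ 2) := by
    apply mul_pos <;> nlinarith
  have h2 : ‖u - b‖ ^ 2 < ‖1 - (starRingEnd ℂ) b * u‖ ^ 2 := by linarith
  exact lt_of_pow_lt_pow_left₀ 2 (norm_nonneg _) h2

private lemma moebius_denom_ne {b u : ℂ} (hb : ‖b‖ < 1) (hu : ‖u‖ < 1) :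
    1 - (starRingEnd ℂ) b * u ≠ 0 := by
  intro h
  have h2 := moebius_abs_lt hb hu
  rw [h] at h2
  simp only [norm_zero] at h2
  exact absurd h2 (norm_nonneg _).not_gt

private lemma moebius_maps {b u : ℂ} (hb : ‖b‖ < 1) (hu : ‖u‖ < 1) :
    ‖(u - b) / (1 - (starRingEnd ℂ) b * u)‖ < 1 := by
  rw [norm_div, div_lt_one]
  · exact moebius_abs_lt hb hu
  · exact (norm_nonneg _).trans_lt (moebius_abs_lt hb hu)

-- real quadratic step for the pseudo-hyperbolic bound
private lemma quad_step {q t r s : ℝ} (hq0 : 0 ≤ q) (hq : q < 1) (ht0 : 0 ≤ t) (ht : t < 1)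
    (hr0 : 0 ≤ r) (hr : r < 1) (hs : s ≤ q * t)
    (hsq : t ^ 2 - 2 * s + q ^ 2 ≤ r ^ 2 * (1 - 2 * s + q ^ 2 * t ^ 2)) :
    t * (1 + q * r) ≤ q + r := by
  have hAB : ((1 + q * r) * t - (q + r)) * ((1 - q * r) * t - (q - r)) ≤ 0 := by
    nlinarith [mul_nonneg (by nlinarith : (0:ℝ) ≤ q * t - s) (by nlinarith : (0:ℝ) ≤ 1 - r ^ 2)]
  nlinarith [hAB, mul_nonneg hr0 (by nlinarith : (0:ℝ) ≤ 1 - q * t),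
    sq_nonneg ((1 + q * r) * t - (q + r))]

private lemma schwarz_pick_point {g : ℂ → ℂ}
    (hg : DifferentiableOn ℂ g (ball 0 1))
    (hb : ∀ z ∈ ball (0:ℂ) 1, ‖g z‖ < 1)
    {a : ℂ} (ha : a ∈ ball (0:ℂ) 1) :
    ‖g a‖ * (1 + ‖g 0‖ * ‖a‖)
      ≤ ‖g 0‖ + ‖a‖ := by
  have h0 : (0:ℂ) ∈ ball (0:ℂ) 1 := by simp
  set b := g 0 with hbdef
  have hblt : ‖b‖ < 1 := hb 0 h0
  set χ : ℂ → ℂ := fun z => (g z - b) / (1 - (starRingEnd ℂ) b * g z) with hχ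
  have hχd : DifferentiableOn ℂ χ (ball 0 1) := by
    intro z hz
    have hgz : DifferentiableAt ℂ g z := hg.differentiableAt (isOpen_ball.mem_nhds hz)
    exact (((hgz.sub_const b).div ((differentiableAt_const _).sub
      ((differentiableAt_const _).mul hgz))
      (moebius_denom_ne hblt (hb z hz)))).differentiableWithinAt
  have hχmaps : MapsTo χ (ball (0:ℂ) 1) (ball (0:ℂ) 1) := by
    intro z hz
    rw [mem_ball_zero_iff]
    exact moebius_maps hblt (hb z hz)
  have hχ0 : χ 0 = 0 := by simp [hχ, hbdef]
  have hle : ‖χ a‖ ≤ ‖a‖ :=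
    Complex.norm_le_norm_of_mapsTo_ball hχd (hχmaps.mono_right ball_subset_closedBall) hχ0 (mem_ball_zero_iff.mp ha)
  -- unpack
  have hne := moebius_denom_ne hblt (hb a ha)
  rw [hχ, norm_div, div_le_iff₀ ((norm_nonneg _).lt_of_ne' (fun hc =>
    hne (norm_eq_zero.mp hc)))] at hle
  -- now square it
  set u := g a with hu
  set q := ‖b‖
  set t := ‖u‖
  set r := ‖a‖
  set s := ((starRingEnd ℂ) b * u).re with hs
  have e1 : ‖u - b‖ ^ 2 = t ^ 2 - 2 * s + q ^ 2 := by
    rw [Complex.sq_norm, Complex.sq_norm, Complex.sq_norm]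
    simp only [hs, Complex.normSq_apply, Complex.sub_re, Complex.sub_im, Complex.mul_re,
      Complex.mul_im, Complex.conj_re, Complex.conj_im]
    ring
  have e2 : ‖1 - (starRingEnd ℂ) b * u‖ ^ 2 = 1 - 2 * s + q ^ 2 * t ^ 2 := by
    rw [Complex.sq_norm, Complex.sq_norm, Complex.sq_norm]
    simp only [hs, Complex.normSq_apply, Complex.sub_re, Complex.sub_im, Complex.mul_re,
      Complex.mul_im, Complex.conj_re, Complex.conj_im, Complex.one_re, Complex.one_im]
    ring
  have hsq : t ^ 2 - 2 * s + q ^ 2 ≤ r ^ 2 * (1 - 2 * s + q ^ 2 * t ^ 2) := by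
    have := mul_le_mul hle hle (norm_nonneg _) (mul_nonneg (norm_nonneg _)
      (norm_nonneg _))
    calc t ^ 2 - 2 * s + q ^ 2 = ‖u - b‖ ^ 2 := e1.symm
      _ ≤ (r * ‖1 - (starRingEnd ℂ) b * u‖) ^ 2 := by
          rw [sq, sq]; exact this
      _ = r ^ 2 * (1 - 2 * s + q ^ 2 * t ^ 2) := by rw [mul_pow, e2]
  have hsle : s ≤ q * t := by
    calc s ≤ ‖(starRingEnd ℂ) b * u‖ := Complex.re_le_norm _
      _ = q * t := by rw [norm_mul, Complex.norm_conj]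
  exact quad_step (norm_nonneg _) hblt (norm_nonneg _) (hb a ha)
    (norm_nonneg _) (mem_ball_zero_iff.mp ha) hsle hsq

private lemma moebius_deriv (b u₀ : ℂ) (h : 1 - (starRingEnd ℂ) b * u₀ ≠ 0) :
    deriv (fun u => (u - b) / (1 - (starRingEnd ℂ) b * u)) u₀
      = (1 - (starRingEnd ℂ) b * b) / (1 - (starRingEnd ℂ) b * u₀) ^ 2 := by
  have h1 : DifferentiableAt ℂ (fun u : ℂ => u - b) u₀ := differentiableAt_id.sub_const b
  have h2 : DifferentiableAt ℂ (fun u : ℂ => 1 - (starRingEnd ℂ) b * u) u₀ :=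
    (differentiableAt_const _).sub ((differentiableAt_const _).mul differentiableAt_id)
  rw [deriv_fun_div h1 h2 h]
  have e1 : deriv (fun u : ℂ => u - b) u₀ = 1 := by
    simp [deriv_sub_const]
  have e2 : deriv (fun u : ℂ => 1 - (starRingEnd ℂ) b * u) u₀ = -((starRingEnd ℂ) b) := by
    rw [deriv_const_sub, deriv_const_mul_field]
    simp
  rw [e1, e2]
  congr 1
  ring

private lemma one_sub_conj_self_abs {b : ℂ} (hb : ‖b‖ < 1) :
    ‖1 - (starRingEnd ℂ) b * b‖ = 1 - ‖b‖ ^ 2 := by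
  have : (starRingEnd ℂ) b * b = ((Complex.normSq b : ℝ) : ℂ) := by
    rw [mul_comm, Complex.mul_conj]
  have h2 : ((Complex.normSq b : ℝ) : ℂ) = ((‖b‖ ^ 2 : ℝ) : ℂ) := by
    rw [Complex.sq_norm]
  rw [this, h2, ← Complex.ofReal_one, ← Complex.ofReal_sub, Complex.norm_real,
    Real.norm_of_nonneg (by nlinarith [norm_nonneg b] : (0:ℝ) ≤ 1 - ‖b‖ ^ 2)]

private lemma schwarz_pick_deriv {g : ℂ → ℂ}
    (hg : DifferentiableOn ℂ g (ball 0 1))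
    (hb : ∀ z ∈ ball (0:ℂ) 1, ‖g z‖ < 1)
    {a : ℂ} (ha : a ∈ ball (0:ℂ) 1) :
    ‖deriv g a‖ * (1 - ‖a‖ ^ 2) ≤ 1 - ‖g a‖ ^ 2 := by
  have hra : ‖a‖ < 1 := mem_ball_zero_iff.mp ha
  have hnega : ‖-a‖ < 1 := by rwa [norm_neg]
  set σ : ℂ → ℂ := fun z => (z + a) / (1 + (starRingEnd ℂ) a * z) with hσ
  have hσeq : ∀ z : ℂ, σ z = (z - -a) / (1 - (starRingEnd ℂ) (-a) * z) := by
    intro z; simp [hσ, sub_neg_eq_add]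
  have hσden : ∀ z ∈ ball (0:ℂ) 1, 1 + (starRingEnd ℂ) a * z ≠ 0 := by
    intro z hz
    have := moebius_denom_ne hnega (mem_ball_zero_iff.mp hz)
    simpa [sub_neg_eq_add] using this
  have hσmem : ∀ z ∈ ball (0:ℂ) 1, σ z ∈ ball (0:ℂ) 1 := by
    intro z hz
    rw [mem_ball_zero_iff, hσeq]
    exact moebius_maps hnega (mem_ball_zero_iff.mp hz)
  have hσ0 : σ 0 = a := by simp [hσ]
  have hσdiff : DifferentiableAt ℂ σ 0 := by
    exact (differentiableAt_id.add_const a).div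
      ((differentiableAt_const _).add ((differentiableAt_const _).mul differentiableAt_id))
      (hσden 0 (by simp))
  have hσderiv : deriv σ 0 = 1 - (starRingEnd ℂ) a * a := by
    have : ∀ z : ℂ, σ z = (z - -a) / (1 - (starRingEnd ℂ) (-a) * z) := hσeq
    rw [funext this, moebius_deriv (-a) 0 (moebius_denom_ne hnega
      (show ‖(0:ℂ)‖ < 1 by simp))]
    simp [map_neg]
  set b := g a with hbdef
  have hblt : ‖b‖ < 1 := hb a ha
  have hMden : 1 - (starRingEnd ℂ) b * b ≠ 0 := moebius_denom_ne hblt hblt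
  set M : ℂ → ℂ := fun u => (u - b) / (1 - (starRingEnd ℂ) b * u) with hM
  have hga : DifferentiableAt ℂ g a := hg.differentiableAt (isOpen_ball.mem_nhds ha)
  have hMdiff : DifferentiableAt ℂ M b :=
    (differentiableAt_id.sub_const b).div
      ((differentiableAt_const _).sub ((differentiableAt_const _).mul differentiableAt_id)) hMden
  have hgσdiff : DifferentiableAt ℂ (g ∘ σ) 0 := by
    refine DifferentiableAt.comp _ ?_ hσdiff
    rw [hσ0]; exact hga
  have hχd : DifferentiableOn ℂ (M ∘ (g ∘ σ)) (ball 0 1) := by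
    intro z hz
    have hσz : DifferentiableAt ℂ σ z := (differentiableAt_id.add_const a).div
      ((differentiableAt_const _).add ((differentiableAt_const _).mul differentiableAt_id))
      (hσden z hz)
    have hgz : DifferentiableAt ℂ g (σ z) := hg.differentiableAt
      (isOpen_ball.mem_nhds (hσmem z hz))
    have hMz : DifferentiableAt ℂ M (g (σ z)) :=
      (differentiableAt_id.sub_const b).div
        ((differentiableAt_const _).sub ((differentiableAt_const _).mul differentiableAt_id))
        (moebius_denom_ne hblt (hb _ (hσmem z hz)))
    exact ((hMz.comp z (hgz.comp z hσz) : DifferentiableAt ℂ (M ∘ (g ∘ σ)) z)).differentiableWithinAt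
  have hχmaps : MapsTo (M ∘ (g ∘ σ)) (ball (0:ℂ) 1) (ball (0:ℂ) 1) := by
    intro z hz
    rw [mem_ball_zero_iff]
    exact moebius_maps hblt (hb _ (hσmem z hz))
  have hχ0 : (M ∘ (g ∘ σ)) 0 = 0 := by
    simp [Function.comp, hσ0, hM, hbdef]
  have hschwarz : ‖deriv (M ∘ (g ∘ σ)) 0‖ ≤ 1 :=
    Complex.norm_deriv_le_one_of_mapsTo_ball hχd (by rw [hχ0]; exact hχmaps.mono_right ball_subset_closedBall) one_pos
  have hchain : deriv (M ∘ (g ∘ σ)) 0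
      = (1 - (starRingEnd ℂ) b * b) / (1 - (starRingEnd ℂ) b * b) ^ 2
        * (deriv g a * (1 - (starRingEnd ℂ) a * a)) := by
    rw [deriv_comp (x := 0) (h₂ := M) (h := g ∘ σ) (by rw [Function.comp_apply, hσ0]; exact hMdiff) hgσdiff]
    rw [deriv_comp (x := 0) (h₂ := g) (h := σ) (by rw [hσ0]; exact hga) hσdiff]
    rw [Function.comp_apply, hσ0, hσderiv, hbdef]
    rw [show M = fun u => (u - g a) / (1 - (starRingEnd ℂ) (g a) * u) from rfl]
    rw [moebius_deriv (g a) (g a) (by rw [← hbdef]; exact hMden)]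
  rw [hchain] at hschwarz
  have habs : ‖deriv g a‖ * (1 - ‖a‖ ^ 2) / (1 - ‖b‖ ^ 2) ≤ 1 := by
    have e : ‖(1 - (starRingEnd ℂ) b * b) / (1 - (starRingEnd ℂ) b * b) ^ 2
        * (deriv g a * (1 - (starRingEnd ℂ) a * a))‖
        = ‖deriv g a‖ * (1 - ‖a‖ ^ 2) / (1 - ‖b‖ ^ 2) := by
      rw [norm_mul, norm_div, norm_pow, norm_mul]
      rw [one_sub_conj_self_abs hblt, one_sub_conj_self_abs hra]
      have hq : (0:ℝ) < 1 - ‖b‖ ^ 2 := by nlinarith [norm_nonneg b]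
      field_simp
    rwa [e] at hschwarz
  have hq : (0:ℝ) < 1 - ‖b‖ ^ 2 := by nlinarith [norm_nonneg b]
  rw [div_le_one hq] at habs
  rw [hbdef] at habs
  simpa using habs

private lemma real_core {α r t D N m S K : ℝ} (hα0 : 0 ≤ α) (hα1 : α < 1)
    (hr0 : 0 ≤ r) (hr1 : r < 1) (ht0 : 0 ≤ t) (ht1 : t < 1)
    (hN0 : 0 ≤ N) (hD0 : 0 ≤ D) (hK0 : 0 ≤ K)
    (hSP1 : D * (1 - r ^ 2) ≤ 1 - t ^ 2)
    (hsq : t ^ 2 * (1 - r ^ 2) ^ 2 ≤ K * (1 - r * t) ^ 2)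
    (hN : N ≤ D + α * t ^ 2)
    (hm : 1 - r * t ≤ m)
    (hS : S * m ^ 2 = 2 * (1 - α) * N) :
    (1 - r ^ 2) ^ 2 * S ≤ 2 * (1 - α) * (1 + α * K) := by
  have hrt : r * t < 1 := by nlinarith
  have hm0 : 0 < m := by linarith
  have hm2 : (1 - r * t) ^ 2 ≤ m ^ 2 := by nlinarith
  have hr2 : (0:ℝ) ≤ 1 - r ^ 2 := by nlinarith
  have step1 : (1 - t ^ 2) * (1 - r ^ 2) ≤ (1 - r * t) ^ 2 := by nlinarith [sq_nonneg (r - t)]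
  have hmain : N * (1 - r ^ 2) ^ 2 ≤ (1 + α * K) * m ^ 2 := by
    have hD1 : D * (1 - r ^ 2) ^ 2 ≤ (1 - r * t) ^ 2 := by
      nlinarith [mul_le_mul_of_nonneg_right hSP1 hr2]
    have hαt : α * (t ^ 2 * (1 - r ^ 2) ^ 2) ≤ α * (K * (1 - r * t) ^ 2) :=
      mul_le_mul_of_nonneg_left hsq hα0
    have hKm : α * (K * (1 - r * t) ^ 2) ≤ α * (K * m ^ 2) :=
      mul_le_mul_of_nonneg_left (mul_le_mul_of_nonneg_left hm2 hK0) hα0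
    have hNr : N * (1 - r ^ 2) ^ 2 ≤ (D + α * t ^ 2) * (1 - r ^ 2) ^ 2 :=
      mul_le_mul_of_nonneg_right hN (sq_nonneg _)
    have hexp : (D + α * t ^ 2) * (1 - r ^ 2) ^ 2
        = D * (1 - r ^ 2) ^ 2 + α * (t ^ 2 * (1 - r ^ 2) ^ 2) := by ring
    have hgoal : (1 + α * K) * m ^ 2 = m ^ 2 + α * (K * m ^ 2) := by ring
    linarith
  have h2a0 : (0:ℝ) ≤ 2 * (1 - α) := by linarith
  have hfin : (1 - r ^ 2) ^ 2 * S * m ^ 2 ≤ (2 * (1 - α) * (1 + α * K)) * m ^ 2 := by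
    have e : (1 - r ^ 2) ^ 2 * S * m ^ 2 = 2 * (1 - α) * (N * (1 - r ^ 2) ^ 2) := by
      calc (1 - r ^ 2) ^ 2 * S * m ^ 2 = (1 - r ^ 2) ^ 2 * (S * m ^ 2) := by ring
        _ = 2 * (1 - α) * (N * (1 - r ^ 2) ^ 2) := by rw [hS]; ring
    rw [e]
    have h := mul_le_mul_of_nonneg_left hmain h2a0
    calc 2 * (1 - α) * (N * (1 - r ^ 2) ^ 2) ≤ 2 * (1 - α) * ((1 + α * K) * m ^ 2) := h
      _ = (2 * (1 - α) * (1 + α * K)) * m ^ 2 := by ring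
  exact le_of_mul_le_mul_right hfin (by positivity)

private lemma real_estimate {α p r t D N m S : ℝ} (hα0 : 0 ≤ α) (hα1 : α < 1)
    (hp0 : 0 ≤ p) (hp1 : p < 1) (hr0 : 0 ≤ r) (hr1 : r < 1) (ht0 : 0 ≤ t) (ht1 : t < 1)
    (hN0 : 0 ≤ N) (hD0 : 0 ≤ D)
    (hSP1 : D * (1 - r ^ 2) ≤ 1 - t ^ 2)
    (hSP2 : t * (1 + p * r) ≤ p + r)
    (hN : N ≤ D + α * t ^ 2)
    (hm : 1 - r * t ≤ m)
    (hS : S * m ^ 2 = 2 * (1 - α) * N) :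
    (1 - r ^ 2) ^ 2 * S ≤ 2 * (1 - α) * (1 + α * ((1 + p) / (1 - p))) := by
  have hr2 : (0:ℝ) ≤ 1 - r ^ 2 := by nlinarith
  have hrt : r * t < 1 := by nlinarith
  have hK0 : (0:ℝ) ≤ (1 + p) / (1 - p) := div_nonneg (by linarith) (by linarith)
  have step2 : t * (1 - r ^ 2) ≤ (p + r) * (1 - r * t) := by nlinarith
  have step3 : t ^ 2 * (1 - r ^ 2) ^ 2 ≤ (p + r) ^ 2 * (1 - r * t) ^ 2 := by
    have h3 := mul_self_le_mul_self (mul_nonneg ht0 hr2) step2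
    nlinarith [h3]
  have step4 : (p + r) ^ 2 ≤ (1 + p) / (1 - p) := by
    rw [le_div_iff₀ (by linarith : (0:ℝ) < 1 - p)]
    have h4a : (p + r) ^ 2 ≤ (1 + p) ^ 2 := by nlinarith
    nlinarith [mul_le_mul_of_nonneg_right h4a (by linarith : (0:ℝ) ≤ 1 - p),
      mul_nonneg (show (0:ℝ) ≤ 1 + p by linarith) (sq_nonneg p)]
  have hsq : t ^ 2 * (1 - r ^ 2) ^ 2 ≤ ((1 + p) / (1 - p)) * (1 - r * t) ^ 2 := by
    have := mul_le_mul_of_nonneg_right step4 (sq_nonneg (1 - r * t))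
    linarith
  exact real_core hα0 hα1 hr0 hr1 ht0 ht1 hN0 hD0 hK0 hSP1 hsq hN hm hS

theorem convex_order_alpha_schwarzian_bound_general
    (f : ℂ → ℂ) (α : ℝ) (hα0 : 0 ≤ α) (hα1 : α < 1)
    (hf : DifferentiableOn ℂ f (Metric.ball 0 1))
    (hf' : ∀ z ∈ Metric.ball (0:ℂ) 1, deriv f z ≠ 0)
    (hf0 : f 0 = 0) (hf1 : deriv f 0 = 1)
    (hconv : ∀ z ∈ Metric.ball (0:ℂ) 1,
      α < (1 + z * (deriv (deriv f) z / deriv f z)).re)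
    (p : ℝ) (hp : p = ‖deriv (deriv f) 0‖ / (2 * (1 - α))) (hp1 : p < 1) :
    ∀ z ∈ Metric.ball (0:ℂ) 1,
      (1 - ‖z‖ ^ 2) ^ 2 *
        ‖deriv (deriv (deriv f)) z / deriv f z
          - 3 / 2 * (deriv (deriv f) z / deriv f z) ^ 2‖
        ≤ 2 * (1 - α) * (1 + α * ((1 + p) / (1 - p))) := by
  intro z hz
  have hfa : AnalyticOnNhd ℂ f (ball 0 1) := hf.analyticOnNhd isOpen_ball
  have h1a : AnalyticOnNhd ℂ (deriv f) (ball 0 1) := hfa.deriv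
  have h2a : AnalyticOnNhd ℂ (deriv (deriv f)) (ball 0 1) := h1a.deriv
  have hcR : (0:ℝ) < 2 * (1 - α) := by linarith
  set c : ℂ := ((2 * (1 - α) : ℝ) : ℂ) with hcdef
  have hcabs : ‖c‖ = 2 * (1 - α) := by
    rw [hcdef, Complex.norm_real, Real.norm_of_nonneg hcR.le]
  have hcne : c ≠ 0 := by
    rw [hcdef]
    exact_mod_cast Complex.ofReal_ne_zero.mpr hcR.ne'
  set w : ℂ → ℂ := fun x => deriv (deriv f) x / deriv f x with hw
  set d : ℂ → ℂ := fun x => c + x * w x with hd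
  set φ : ℂ → ℂ := fun x => w x / d x with hφ
  -- real part bound for d
  have hdre : ∀ x ∈ ball (0:ℂ) 1, α - 1 < (x * w x).re := by
    intro x hx
    have h := hconv x hx
    have : (1 + x * w x).re = 1 + (x * w x).re := by
      simp [Complex.add_re]
    linarith [h.trans_eq this]
  have hdre' : ∀ x ∈ ball (0:ℂ) 1, 1 - α < (d x).re := by
    intro x hx
    have h := hdre x hx
    have : (d x).re = 2 * (1 - α) + (x * w x).re := by
      simp [hd, hcdef, Complex.add_re, Complex.ofReal_re]
    rw [this]
    linarith
  have hdne : ∀ x ∈ ball (0:ℂ) 1, d x ≠ 0 := by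
    intro x hx h
    have := hdre' x hx
    rw [h] at this
    simp at this
    linarith
  -- |x w x| < |d x|
  have habslt : ∀ x ∈ ball (0:ℂ) 1, ‖x * w x‖ < ‖d x‖ := by
    intro x hx
    have hre := hdre x hx
    have hsq : ‖x * w x‖ ^ 2 < ‖d x‖ ^ 2 := by
      rw [Complex.sq_norm, Complex.sq_norm]
      have : d x = c + x * w x := rfl
      rw [this, hcdef]
      simp only [Complex.normSq_apply, Complex.add_re, Complex.add_im, Complex.ofReal_re,
        Complex.ofReal_im]
      nlinarith [hre, hcR]
    exact lt_of_pow_lt_pow_left₀ 2 (norm_nonneg _) hsq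
  have hφprod : ∀ x : ℂ, x * φ x = (x * w x) / d x := by
    intro x
    simp only [hφ]
    ring
  have hωlt : ∀ x ∈ ball (0:ℂ) 1, ‖x * φ x‖ < 1 := by
    intro x hx
    rw [hφprod, norm_div, div_lt_one ((norm_nonneg _).trans_lt (habslt x hx))]
    exact habslt x hx
  -- differentiability of φ
  have hφdiff : ∀ x ∈ ball (0:ℂ) 1, DifferentiableAt ℂ φ x := by
    intro x hx
    have hA1 : DifferentiableAt ℂ (deriv f) x := (h1a x hx).differentiableAt
    have hA2 : DifferentiableAt ℂ (deriv (deriv f)) x := (h2a x hx).differentiableAt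
    have hwdiff : DifferentiableAt ℂ w x := hA2.div hA1 (hf' x hx)
    have hddiff : DifferentiableAt ℂ d x :=
      (differentiableAt_const c).add (differentiableAt_id.mul hwdiff)
    exact hwdiff.div hddiff (hdne x hx)
  have hφdiffOn : DifferentiableOn ℂ φ (ball 0 1) :=
    fun x hx => (hφdiff x hx).differentiableWithinAt
  -- φ 0 and its abs
  have h0mem : (0:ℂ) ∈ ball (0:ℂ) 1 := by simp
  have hφ0 : ‖φ 0‖ = p := by
    have hw0 : w 0 = deriv (deriv f) 0 := by
      rw [hw]; simp [hf1]
    have hd0 : d 0 = c := by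
      rw [hd]; simp
    simp only [hφ, hw0, hd0]
    rw [norm_div, hcabs, hp]
  -- Schwarz on x * φ x gives |φ| ≤ 1
  have hφle1 : ∀ x ∈ ball (0:ℂ) 1, ‖φ x‖ ≤ 1 := by
    intro x hx
    rcases eq_or_ne x 0 with rfl | hx0
    · rw [hφ0]; exact hp1.le
    · have hωd : DifferentiableOn ℂ (fun y => y * φ y) (ball 0 1) :=
        fun y hy => (differentiableAt_id.mul (hφdiff y hy)).differentiableWithinAt
      have hωmaps : MapsTo (fun y => y * φ y) (ball (0:ℂ) 1) (ball (0:ℂ) 1) := by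
        intro y hy
        rw [mem_ball_zero_iff]
        exact hωlt y hy
      have hω0 : (fun y => y * φ y) 0 = 0 := by simp
      have hle := Complex.norm_le_norm_of_mapsTo_ball hωd (hωmaps.mono_right ball_subset_closedBall) hω0
        (mem_ball_zero_iff.mp hx)
      rw [norm_mul] at hle
      have hx0' : 0 < ‖x‖ := norm_pos_iff.mpr hx0
      have hle' : ‖x‖ * ‖φ x‖ ≤ ‖x‖ * 1 := by rwa [mul_one]
      exact le_of_mul_le_mul_left hle' hx0'
  -- strict inequality via maximum modulus
  have hφlt1 : ∀ x ∈ ball (0:ℂ) 1, ‖φ x‖ < 1 := by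
    intro x hx
    rcases lt_or_eq_of_le (hφle1 x hx) with h | h
    · exact h
    · exfalso
      have hmax : IsMaxOn (norm ∘ φ) (ball (0:ℂ) 1) x := by
        intro y hy
        simp only [Function.comp_apply]
        rw [h]
        exact hφle1 y hy
      have heq := Complex.eqOn_of_isPreconnected_of_isMaxOn_norm
        (convex_ball (0:ℂ) 1).isPreconnected isOpen_ball hφdiffOn hx hmax
      have h0 := heq h0mem
      simp only [Function.const_apply] at h0
      have : ‖φ 0‖ = ‖φ x‖ := by rw [h0]
      rw [hφ0, h] at this
      linarith
  -- Schwarz–Pick estimates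
  have hSP1 := schwarz_pick_deriv hφdiffOn hφlt1 hz
  have hSP2raw := schwarz_pick_point hφdiffOn hφlt1 hz
  rw [hφ0] at hSP2raw
  -- derivative computations at z
  have hA1 : DifferentiableAt ℂ (deriv f) z := (h1a z hz).differentiableAt
  have hA2 : DifferentiableAt ℂ (deriv (deriv f)) z := (h2a z hz).differentiableAt
  have hwdiff : DifferentiableAt ℂ w z := hA2.div hA1 (hf' z hz)
  have hddiff : DifferentiableAt ℂ d z :=
    (differentiableAt_const c).add (differentiableAt_id.mul hwdiff)
  have hwder : deriv w z = (deriv (deriv (deriv f)) z * deriv f z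
      - deriv (deriv f) z * deriv (deriv f) z) / deriv f z ^ 2 := by
    rw [hw]
    exact deriv_fun_div hA2 hA1 (hf' z hz)
  have hdder : deriv d z = w z + z * deriv w z := by
    rw [hd]
    rw [deriv_const_add]
    rw [deriv_fun_mul differentiableAt_fun_id hwdiff]
    simp
  have hφder : deriv φ z = (deriv w z * d z - w z * deriv d z) / d z ^ 2 := by
    rw [hφ]
    exact deriv_fun_div hwdiff hddiff (hdne z hz)
  -- the key algebraic identity
  have hAne : deriv f z ≠ 0 := hf' z hz
  have hDne : d z ≠ 0 := hdne z hz
  have hDval : d z = c + z * (deriv (deriv f) z / deriv f z) := rfl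
  have hwval : w z = deriv (deriv f) z / deriv f z := rfl
  have hcα : c = 2 * (1 - (α : ℂ)) := by rw [hcdef]; push_cast; ring
  have hzw : d z = c + z * w z := rfl
  have hS3 : deriv (deriv (deriv f)) z / deriv f z
        - 3 / 2 * (deriv (deriv f) z / deriv f z) ^ 2
      = deriv w z - (w z) ^ 2 / 2 := by
    rw [hwder, hwval]
    field_simp
    ring
  have h1 : 1 - z * φ z = c / d z := by
    rw [hφprod z, eq_div_iff hDne, sub_mul, one_mul, div_mul_cancel₀ _ hDne, hzw]
    ring
  have h2 : deriv φ z + (α : ℂ) * (φ z) ^ 2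
      = c * (deriv w z - (w z) ^ 2 / 2) / d z ^ 2 := by
    rw [hφder, hdder]
    simp only [hφ]
    field_simp
    rw [hzw, hcα]
    ring
  have key : (deriv (deriv (deriv f)) z / deriv f z
        - 3 / 2 * (deriv (deriv f) z / deriv f z) ^ 2) * (1 - z * φ z) ^ 2
      = c * (deriv φ z + (α : ℂ) * (φ z) ^ 2) := by
    rw [h1, h2, hS3]
    field_simp
  -- take absolute values
  have habskey : ‖deriv (deriv (deriv f)) z / deriv f z
        - 3 / 2 * (deriv (deriv f) z / deriv f z) ^ 2‖ * ‖1 - z * φ z‖ ^ 2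
      = 2 * (1 - α) * ‖deriv φ z + (α : ℂ) * (φ z) ^ 2‖ := by
    have := congrArg norm key
    rwa [norm_mul, norm_pow, norm_mul, hcabs] at this
  -- real data
  set r := ‖z‖ with hr
  set t := ‖φ z‖ with ht
  have hr1 : r < 1 := mem_ball_zero_iff.mp hz
  have ht1 : t < 1 := hφlt1 z hz
  have hp0 : 0 ≤ p := by
    rw [hp]
    exact div_nonneg (norm_nonneg _) (by linarith)
  have hm : 1 - r * t ≤ ‖1 - z * φ z‖ := by
    have htri := norm_sub_norm_le (1 : ℂ) (z * φ z)
    rwa [norm_one, norm_mul] at htri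
  have hNle : ‖deriv φ z + (α : ℂ) * (φ z) ^ 2‖
      ≤ ‖deriv φ z‖ + α * t ^ 2 := by
    refine (norm_add_le _ _).trans ?_
    rw [norm_mul, norm_pow, Complex.norm_real, Real.norm_of_nonneg hα0]
  exact real_estimate hα0 hα1 hp0 hp1 (norm_nonneg z) hr1 (norm_nonneg _) ht1
    (norm_nonneg _) (norm_nonneg _) hSP1 hSP2raw hNle hm habskey
end

section
/- If f is holomorphic on the unit disk with nonvanishing derivative and there exists a holomorphic φ : 𝔻 → 𝔻 such that f''(z)/f'(z) = 2(1-α)·φ(z)/(1-zφ(z)) on the disk (0 ≤ α < 1), then the Schwarzian derivative satisfies Sf(z) = 2(1-α)·(φ'(z) + α·φ(z)²)/(1-zφ(z))². -/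
theorem schwarzian_formula_from_subordination
    (f : ℂ → ℂ) (α : ℝ) (hα0 : 0 ≤ α) (hα1 : α < 1)
    (hf : DifferentiableOn ℂ f (Metric.ball 0 1))
    (hf' : ∀ z ∈ Metric.ball (0:ℂ) 1, deriv f z ≠ 0)
    (φ : ℂ → ℂ)
    (hφ : DifferentiableOn ℂ φ (Metric.ball 0 1))
    (hφ1 : ∀ z ∈ Metric.ball (0:ℂ) 1, ‖φ z‖ < 1)
    (hsub : ∀ z ∈ Metric.ball (0:ℂ) 1,
      deriv (deriv f) z / deriv f z = 2 * (1 - (α : ℂ)) * φ z / (1 - z * φ z)) :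
    ∀ z ∈ Metric.ball (0:ℂ) 1,
      deriv (deriv (deriv f)) z / deriv f z
          - 3 / 2 * (deriv (deriv f) z / deriv f z) ^ 2
        = 2 * (1 - (α : ℂ)) * (deriv φ z + (α : ℂ) * (φ z) ^ 2) / (1 - z * φ z) ^ 2 := by
  intro z hz
  have hopen : IsOpen (Metric.ball (0:ℂ) 1) := Metric.isOpen_ball
  have hfa : AnalyticOnNhd ℂ f (Metric.ball 0 1) := hf.analyticOnNhd hopen
  have hf'a : AnalyticOnNhd ℂ (deriv f) (Metric.ball 0 1) := hfa.deriv
  have hD : ∀ w ∈ Metric.ball (0:ℂ) 1, (1 : ℂ) - w * φ w ≠ 0 := by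
    intro w hw h
    have h1 : w * φ w = 1 := by
      have := sub_eq_zero.mp h
      exact this.symm
    have hw1 : ‖w‖ < 1 := by
      simpa [Complex.dist_eq] using Metric.mem_ball.mp hw
    have hφw : ‖φ w‖ < 1 := hφ1 w hw
    have habs : ‖w * φ w‖ < 1 := by
      rw [norm_mul]
      nlinarith [norm_nonneg w, norm_nonneg (φ w)]
    rw [h1] at habs
    simp at habs
  have heq : Set.EqOn (deriv (deriv f))
      (fun w => 2 * (1 - (α:ℂ)) * φ w / (1 - w * φ w) * deriv f w)
      (Metric.ball 0 1) := by
    intro w hw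
    have h := hsub w hw
    rw [div_eq_iff (hf' w hw)] at h
    exact h
  have hev : deriv (deriv f) =ᶠ[nhds z]
      fun w => 2 * (1 - (α:ℂ)) * φ w / (1 - w * φ w) * deriv f w :=
    Filter.eventuallyEq_of_mem (hopen.mem_nhds hz) heq
  have hφd : HasDerivAt φ (deriv φ z) z :=
    (hφ.differentiableAt (hopen.mem_nhds hz)).hasDerivAt
  have hfd' : HasDerivAt (deriv f) (deriv (deriv f) z) z :=
    ((hf'a z hz).differentiableAt).hasDerivAt
  have hden : HasDerivAt (fun w => (1:ℂ) - w * φ w) (-(1 * φ z + z * deriv φ z)) z :=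
    ((hasDerivAt_id z).mul hφd).const_sub 1
  have hnum : HasDerivAt (fun w => 2 * (1 - (α:ℂ)) * φ w) (2 * (1 - (α:ℂ)) * deriv φ z) z :=
    hφd.const_mul _
  have hg : HasDerivAt (fun w => 2 * (1 - (α:ℂ)) * φ w / (1 - w * φ w))
      ((2 * (1 - (α:ℂ)) * deriv φ z * (1 - z * φ z)
        - 2 * (1 - (α:ℂ)) * φ z * (-(1 * φ z + z * deriv φ z))) / (1 - z * φ z) ^ 2) z :=
    hnum.div hden (hD z hz)
  have hprod : HasDerivAt
      (fun w => 2 * (1 - (α:ℂ)) * φ w / (1 - w * φ w) * deriv f w)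
      ((2 * (1 - (α:ℂ)) * deriv φ z * (1 - z * φ z)
        - 2 * (1 - (α:ℂ)) * φ z * (-(1 * φ z + z * deriv φ z))) / (1 - z * φ z) ^ 2
        * deriv f z
        + 2 * (1 - (α:ℂ)) * φ z / (1 - z * φ z) * deriv (deriv f) z) z :=
    hg.mul hfd'
  have h3 : deriv (deriv (deriv f)) z
      = (2 * (1 - (α:ℂ)) * deriv φ z * (1 - z * φ z)
        - 2 * (1 - (α:ℂ)) * φ z * (-(1 * φ z + z * deriv φ z))) / (1 - z * φ z) ^ 2
        * deriv f z
        + 2 * (1 - (α:ℂ)) * φ z / (1 - z * φ z) * deriv (deriv f) z := by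
    rw [hev.deriv_eq, hprod.deriv]
  have hf2 : deriv (deriv f) z
      = 2 * (1 - (α:ℂ)) * φ z / (1 - z * φ z) * deriv f z := heq hz
  have hfz := hf' z hz
  have hDz := hD z hz
  have hstep : deriv (deriv (deriv f)) z / deriv f z
      = (2 * (1 - (α:ℂ)) * deriv φ z * (1 - z * φ z)
        - 2 * (1 - (α:ℂ)) * φ z * (-(1 * φ z + z * deriv φ z))) / (1 - z * φ z) ^ 2
        + (2 * (1 - (α:ℂ)) * φ z / (1 - z * φ z)) * (2 * (1 - (α:ℂ)) * φ z / (1 - z * φ z)) := by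
    rw [h3, hf2, ← mul_assoc, add_div, mul_div_cancel_right₀ _ hfz,
      mul_div_cancel_right₀ _ hfz]
  rw [hstep, hsub z hz]
  field_simp
  ring
end
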